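/- arXiv:2402.12200 — 11 statements merged into one kernel-verified Lean document; each statement's English description precedes it below -/
import Mathlib

section
/- Let (μ*, u*, v*) be a stable outcome of the LTU matching problem, and define the mixed strategies p*, q* by p*_{xy} = Φ_{xy} μ*_{xy} / (Φᵀμ*), q*_x = n_x u*_x / (nᵀu* + mᵀv*), q*_y = m_y v*_y / (nᵀu* + mᵀv*). Then for every probability distribution p on X × Y, the expected loss of player 1 satisfies ℓ(p, q*) ≥ 1 / (2(nᵀu* + mᵀv*)), with equality when p = p*. In particular p* is a best response to q* in the generalized hide-and-seek game. -/
/-- Against q*, every mixed strategy p of player 1 yields expected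
loss at least 1/(2(nᵀu* + mᵀv*)), with equality at p*; hence p* is a best
response to q* in the generalized hide-and-seek game. -/
theorem ltu_player1_best_response
    {X Y : Type*} [Fintype X] [Fintype Y] [Nonempty X] [Nonempty Y]
    (n : X → ℝ) (m : Y → ℝ) (lam Φ : X → Y → ℝ)
    (μ : X → Y → ℝ) (u : X → ℝ) (v : Y → ℝ)
    (hn : ∀ x, 0 < n x) (hm : ∀ y, 0 < m y)
    (hlam : ∀ x y, lam x y ∈ Set.Ioo (0 : ℝ) 1)
    (hΦ : ∀ x y, 0 < Φ x y)
    (hμ0 : ∀ x y, 0 ≤ μ x y) (hu0 : ∀ x, 0 ≤ u x) (hv0 : ∀ y, 0 ≤ v y)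
    (h1 : ∀ x y, lam x y * u x + (1 - lam x y) * v y ≥ Φ x y / 2)
    (h2 : ∀ x, ∑ y, μ x y ≤ n x)
    (h3 : ∀ y, ∑ x, μ x y ≤ m y)
    (h4 : ∀ x y, 0 < μ x y → lam x y * u x + (1 - lam x y) * v y = Φ x y / 2)
    (h5 : ∀ x, 0 < u x → ∑ y, μ x y = n x)
    (h6 : ∀ y, 0 < v y → ∑ x, μ x y = m y)
    -- expected loss of player 1
    (ℓ : (X × Y → ℝ) → (X ⊕ Y → ℝ) → ℝ)
    (hℓ : ∀ p q, ℓ p q = ∑ x, ∑ y, p (x, y) *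
      (q (Sum.inl x) * (lam x y / (n x * Φ x y)) +
       q (Sum.inr y) * ((1 - lam x y) / (m y * Φ x y))))
    -- the strategies p*, q*
    (pstar : X × Y → ℝ) (qstar : X ⊕ Y → ℝ)
    (hp : ∀ z : X × Y, pstar z = Φ z.1 z.2 * μ z.1 z.2 / (∑ x, ∑ y, Φ x y * μ x y))
    (hq : qstar = Sum.elim
      (fun x => n x * u x / ((∑ x, n x * u x) + (∑ y, m y * v y)))
      (fun y => m y * v y / ((∑ x, n x * u x) + (∑ y, m y * v y)))) :
    (∀ p : X × Y → ℝ, (∀ z, 0 ≤ p z) → (∑ z, p z) = 1 →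
      ℓ p qstar ≥ 1 / (2 * ((∑ x, n x * u x) + (∑ y, m y * v y)))) ∧
    ℓ pstar qstar = 1 / (2 * ((∑ x, n x * u x) + (∑ y, m y * v y))) := by

  set S := (∑ x, n x * u x) + (∑ y, m y * v y) with hSdef
  set T := ∑ x, ∑ y, Φ x y * μ x y with hTdef
  -- μ is not identically zero
  obtain ⟨x0, y0, hμpos⟩ : ∃ x y, 0 < μ x y := by
    by_contra hcon
    push_neg at hcon
    have hμz : ∀ x y, μ x y = 0 := fun x y => le_antisymm (hcon x y) (hμ0 x y)
    have huz : ∀ x, u x = 0 := by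
      intro x
      by_contra hx
      have := h5 x ((hu0 x).lt_of_ne (Ne.symm hx))
      simp [hμz] at this
      exact absurd this.symm (hn x).ne'
    have hvz : ∀ y, v y = 0 := by
      intro y
      by_contra hy
      have := h6 y ((hv0 y).lt_of_ne (Ne.symm hy))
      simp [hμz] at this
      exact absurd this.symm (hm y).ne'
    have hx := h1 (Classical.arbitrary X) (Classical.arbitrary Y)
    rw [huz, hvz] at hx
    have := hΦ (Classical.arbitrary X) (Classical.arbitrary Y)
    simp at hx
    linarith
  have hT : 0 < T := by
    rw [hTdef]
    refine Finset.sum_pos' (fun x _ => Finset.sum_nonneg fun y _ =>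
      mul_nonneg (hΦ x y).le (hμ0 x y)) ⟨x0, Finset.mem_univ _, ?_⟩
    exact Finset.sum_pos' (fun y _ => mul_nonneg (hΦ x0 y).le (hμ0 x0 y))
      ⟨y0, Finset.mem_univ _, mul_pos (hΦ x0 y0) hμpos⟩
  have hS : 0 < S := by
    have hkey := h4 x0 y0 hμpos
    have huv : 0 < u x0 ∨ 0 < v y0 := by
      by_contra hcon
      push_neg at hcon
      have hu' : u x0 = 0 := le_antisymm hcon.1 (hu0 x0)
      have hv' : v y0 = 0 := le_antisymm hcon.2 (hv0 y0)
      rw [hu', hv'] at hkey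
      have := hΦ x0 y0
      simp at hkey
      linarith
    have h1' : 0 ≤ ∑ x, n x * u x :=
      Finset.sum_nonneg fun x _ => mul_nonneg (hn x).le (hu0 x)
    have h2' : 0 ≤ ∑ y, m y * v y :=
      Finset.sum_nonneg fun y _ => mul_nonneg (hm y).le (hv0 y)
    rcases huv with h | h
    · have : 0 < ∑ x, n x * u x :=
        Finset.sum_pos' (fun x _ => mul_nonneg (hn x).le (hu0 x))
          ⟨x0, Finset.mem_univ _, mul_pos (hn x0) h⟩
      rw [hSdef]; linarith
    · have : 0 < ∑ y, m y * v y :=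
        Finset.sum_pos' (fun y _ => mul_nonneg (hm y).le (hv0 y))
          ⟨y0, Finset.mem_univ _, mul_pos (hm y0) h⟩
      rw [hSdef]; linarith
  -- coefficient computation
  have hc : ∀ x y, qstar (Sum.inl x) * (lam x y / (n x * Φ x y)) +
      qstar (Sum.inr y) * ((1 - lam x y) / (m y * Φ x y)) =
      (lam x y * u x + (1 - lam x y) * v y) / (Φ x y * S) := by
    intro x y
    rw [hq]
    simp only [Sum.elim_inl, Sum.elim_inr]
    field_simp [hS.ne', (hn x).ne', (hm y).ne', (hΦ x y).ne']
  have hcb : ∀ x y, 1 / (2 * S) ≤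
      (lam x y * u x + (1 - lam x y) * v y) / (Φ x y * S) := by
    intro x y
    rw [div_le_div_iff₀ (by positivity) (mul_pos (hΦ x y) hS)]
    nlinarith [mul_le_mul_of_nonneg_left (h1 x y) hS.le, hΦ x y]
  constructor
  · intro p hp0 hp1
    rw [hℓ]
    have hsum : ∑ x, ∑ y, p (x, y) = 1 := by
      rw [← hp1, Fintype.sum_prod_type]
    have key : ∑ x, ∑ y, p (x, y) * (1 / (2 * S)) ≤
        ∑ x, ∑ y, p (x, y) *
          (qstar (Sum.inl x) * (lam x y / (n x * Φ x y)) +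
           qstar (Sum.inr y) * ((1 - lam x y) / (m y * Φ x y))) :=
      Finset.sum_le_sum fun x _ => Finset.sum_le_sum fun y _ => by
        rw [hc x y]
        exact mul_le_mul_of_nonneg_left (hcb x y) (hp0 _)
    refine le_trans (le_of_eq ?_) key
    simp only [← Finset.sum_mul, hsum, one_mul]
  · rw [hℓ]
    have hterm : ∀ x y, pstar (x, y) *
        (qstar (Sum.inl x) * (lam x y / (n x * Φ x y)) +
         qstar (Sum.inr y) * ((1 - lam x y) / (m y * Φ x y))) =
        Φ x y * μ x y * (1 / (2 * S)) / T := by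
      intro x y
      rw [hc x y, hp]
      rcases (hμ0 x y).eq_or_lt with h | h
      · simp [← h]
      · rw [show ((x, y).1) = x from rfl, show ((x, y).2) = y from rfl, h4 x y h]
        field_simp [hT.ne', hS.ne', (hΦ x y).ne']
    simp only [hterm, ← Finset.sum_div, ← Finset.sum_mul, ← hTdef]
    rw [mul_comm, mul_div_assoc, div_self hT.ne', mul_one]
end

section
/- Let (μ*, u*, v*) be a stable outcome of the LTU matching problem, and define p*, q* by p*_{xy} = Φ_{xy} μ*_{xy} / (Φᵀμ*), q*_x = n_x u*_x / (nᵀu* + mᵀv*), q*_y = m_y v*_y / (nᵀu* + mᵀv*). Then for every probability distribution q on X ⊔ Y, the expected payoff of player 2 satisfies π(p*, q) ≤ 1 / (2 Φᵀμ*), with equality when q = q*. In particular q* is a best response to p*. -/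
/-- Against p*, every mixed strategy q of player 2 yields expected
payoff at most 1/(2 Φᵀμ*), with equality at q*; hence q* is a best response to p*. -/
theorem ltu_player2_best_response
    {X Y : Type*} [Fintype X] [Fintype Y] [Nonempty X] [Nonempty Y]
    (n : X → ℝ) (m : Y → ℝ) (lam Φ : X → Y → ℝ)
    (μ : X → Y → ℝ) (u : X → ℝ) (v : Y → ℝ)
    (hn : ∀ x, 0 < n x) (hm : ∀ y, 0 < m y)
    (hlam : ∀ x y, lam x y ∈ Set.Ioo (0 : ℝ) 1)
    (hΦ : ∀ x y, 0 < Φ x y)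
    (hμ0 : ∀ x y, 0 ≤ μ x y) (hu0 : ∀ x, 0 ≤ u x) (hv0 : ∀ y, 0 ≤ v y)
    (h1 : ∀ x y, lam x y * u x + (1 - lam x y) * v y ≥ Φ x y / 2)
    (h2 : ∀ x, ∑ y, μ x y ≤ n x)
    (h3 : ∀ y, ∑ x, μ x y ≤ m y)
    (h4 : ∀ x y, 0 < μ x y → lam x y * u x + (1 - lam x y) * v y = Φ x y / 2)
    (h5 : ∀ x, 0 < u x → ∑ y, μ x y = n x)
    (h6 : ∀ y, 0 < v y → ∑ x, μ x y = m y)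
    -- expected payoff of player 2
    (π : (X × Y → ℝ) → (X ⊕ Y → ℝ) → ℝ)
    (hπ : ∀ p q, π p q = ∑ x, ∑ y, p (x, y) *
      (q (Sum.inl x) * (1 / (2 * n x * Φ x y)) +
       q (Sum.inr y) * (1 / (2 * m y * Φ x y))))
    -- the strategies p*, q*
    (pstar : X × Y → ℝ) (qstar : X ⊕ Y → ℝ)
    (hp : ∀ z : X × Y, pstar z = Φ z.1 z.2 * μ z.1 z.2 / (∑ x, ∑ y, Φ x y * μ x y))
    (hq : qstar = Sum.elim
      (fun x => n x * u x / ((∑ x, n x * u x) + (∑ y, m y * v y)))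
      (fun y => m y * v y / ((∑ x, n x * u x) + (∑ y, m y * v y)))) :
    (∀ q : X ⊕ Y → ℝ, (∀ z, 0 ≤ q z) → (∑ z, q z) = 1 →
      π pstar q ≤ 1 / (2 * ∑ x, ∑ y, Φ x y * μ x y)) ∧
    π pstar qstar = 1 / (2 * ∑ x, ∑ y, Φ x y * μ x y) := by
  classical
  set S := ∑ x, ∑ y, Φ x y * μ x y with hSdef
  set T := (∑ x, n x * u x) + (∑ y, m y * v y) with hTdef
  obtain ⟨x0⟩ := (inferInstance : Nonempty X)
  obtain ⟨y0⟩ := (inferInstance : Nonempty Y)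
  -- some u or v is positive
  have huv : 0 < u x0 ∨ 0 < v y0 := by
    by_contra h
    push_neg at h
    have hu : u x0 = 0 := le_antisymm h.1 (hu0 x0)
    have hv : v y0 = 0 := le_antisymm h.2 (hv0 y0)
    have h1' := h1 x0 y0
    have hΦ' := hΦ x0 y0
    rw [hu, hv] at h1'
    simp at h1'
    linarith
  have hT0 : 0 < T := by
    have hA : ∀ x ∈ Finset.univ, 0 ≤ n x * u x :=
      fun x _ => mul_nonneg (hn x).le (hu0 x)
    have hB : ∀ y ∈ Finset.univ, 0 ≤ m y * v y :=
      fun y _ => mul_nonneg (hm y).le (hv0 y)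
    rcases huv with h | h
    · have h1' : 0 < ∑ x, n x * u x :=
        Finset.sum_pos' hA ⟨x0, Finset.mem_univ _, mul_pos (hn x0) h⟩
      have h2' : 0 ≤ ∑ y, m y * v y := Finset.sum_nonneg hB
      rw [hTdef]; linarith
    · have h1' : 0 ≤ ∑ x, n x * u x := Finset.sum_nonneg hA
      have h2' : 0 < ∑ y, m y * v y :=
        Finset.sum_pos' hB ⟨y0, Finset.mem_univ _, mul_pos (hm y0) h⟩
      rw [hTdef]; linarith
  have hS0 : 0 < S := by
    have hnonneg : ∀ x ∈ Finset.univ, 0 ≤ ∑ y, Φ x y * μ x y :=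
      fun x _ => Finset.sum_nonneg fun y _ => mul_nonneg (hΦ x y).le (hμ0 x y)
    rcases huv with h | h
    · have hsum : 0 < ∑ y, μ x0 y := by rw [h5 x0 h]; exact hn x0
      obtain ⟨y1, _, hy1⟩ := Finset.exists_lt_of_sum_lt
        (f := fun _ => (0:ℝ)) (g := fun y => μ x0 y) (by simpa using hsum)
      refine Finset.sum_pos' hnonneg ⟨x0, Finset.mem_univ _, ?_⟩
      exact Finset.sum_pos'
        (fun y _ => mul_nonneg (hΦ x0 y).le (hμ0 x0 y))
        ⟨y1, Finset.mem_univ _, mul_pos (hΦ x0 y1) hy1⟩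
    · have hsum : 0 < ∑ x, μ x y0 := by rw [h6 y0 h]; exact hm y0
      obtain ⟨x1, _, hx1⟩ := Finset.exists_lt_of_sum_lt
        (f := fun _ => (0:ℝ)) (g := fun x => μ x y0) (by simpa using hsum)
      refine Finset.sum_pos' hnonneg ⟨x1, Finset.mem_univ _, ?_⟩
      exact Finset.sum_pos'
        (fun y _ => mul_nonneg (hΦ x1 y).le (hμ0 x1 y))
        ⟨y0, Finset.mem_univ _, mul_pos (hΦ x1 y0) hx1⟩
  -- closed form for the payoff
  have hpi : ∀ q : X ⊕ Y → ℝ, π pstar q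
      = (∑ x, q (Sum.inl x) / n x * (∑ y, μ x y)) / (2 * S)
      + (∑ y, q (Sum.inr y) / m y * (∑ x, μ x y)) / (2 * S) := by
    intro q
    rw [hπ]
    have expand : ∀ x y, pstar (x, y) *
        (q (Sum.inl x) * (1 / (2 * n x * Φ x y)) +
         q (Sum.inr y) * (1 / (2 * m y * Φ x y)))
        = q (Sum.inl x) / n x * μ x y / (2 * S)
        + q (Sum.inr y) / m y * μ x y / (2 * S) := by
      intro x y
      rw [hp]
      simp only [← hSdef]
      have hn' := (hn x).ne'
      have hm' := (hm y).ne'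
      have hΦ' := (hΦ x y).ne'
      have hS' := hS0.ne'
      field_simp
    simp only [expand]
    have e1 : ∀ x, ∑ y, q (Sum.inl x) / n x * μ x y / (2 * S)
        = q (Sum.inl x) / n x * (∑ y, μ x y) / (2 * S) := by
      intro x
      rw [← Finset.sum_div, ← Finset.mul_sum]
    have e2 : ∑ x, ∑ y, q (Sum.inr y) / m y * μ x y / (2 * S)
        = ∑ y, q (Sum.inr y) / m y * (∑ x, μ x y) / (2 * S) := by
      rw [Finset.sum_comm]
      exact Finset.sum_congr rfl fun y _ => by
        rw [← Finset.sum_div, ← Finset.mul_sum]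
    simp_rw [Finset.sum_add_distrib]
    rw [e2]
    simp_rw [e1]
    rw [← Finset.sum_div, ← Finset.sum_div]
  refine ⟨?_, ?_⟩
  · -- inequality
    intro q hq0 hq1
    rw [hpi q]
    have b1 : ∑ x, q (Sum.inl x) / n x * (∑ y, μ x y) ≤ ∑ x, q (Sum.inl x) := by
      refine Finset.sum_le_sum fun x _ => ?_
      have h := mul_le_mul_of_nonneg_left (h2 x)
        (div_nonneg (hq0 (Sum.inl x)) (hn x).le)
      rwa [div_mul_cancel₀ _ (hn x).ne'] at h
    have b2 : ∑ y, q (Sum.inr y) / m y * (∑ x, μ x y) ≤ ∑ y, q (Sum.inr y) := by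
      refine Finset.sum_le_sum fun y _ => ?_
      have h := mul_le_mul_of_nonneg_left (h3 y)
        (div_nonneg (hq0 (Sum.inr y)) (hm y).le)
      rwa [div_mul_cancel₀ _ (hm y).ne'] at h
    have hsplit : (∑ x, q (Sum.inl x)) + (∑ y, q (Sum.inr y)) = 1 := by
      rw [← Fintype.sum_sum_type]; exact hq1
    rw [← add_div]
    have h2S : (0:ℝ) < 2 * S := by linarith
    exact (div_le_div_iff_of_pos_right h2S).mpr (by linarith)
  · -- equality at qstar
    rw [hpi qstar, hq]
    simp only [Sum.elim_inl, Sum.elim_inr, ← hTdef]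
    have e1 : ∀ x, n x * u x / T / n x * (∑ y, μ x y) = n x * u x / T := by
      intro x
      rcases eq_or_lt_of_le (hu0 x) with h | h
      · simp [← h]
      · rw [h5 x h, div_mul_cancel₀ _ (hn x).ne']
    have e2 : ∀ y, m y * v y / T / m y * (∑ x, μ x y) = m y * v y / T := by
      intro y
      rcases eq_or_lt_of_le (hv0 y) with h | h
      · simp [← h]
      · rw [h6 y h, div_mul_cancel₀ _ (hm y).ne']
    simp_rw [e1, e2]
    rw [← Finset.sum_div, ← Finset.sum_div, ← add_div, ← add_div,
      ← hTdef, div_self hT0.ne']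
end

section
/- If (μ*, u*, v*) is a stable outcome of the LTU matching problem with all Φ_{xy} > 0, then the pair of mixed strategies (p*, q*) defined by p*_{xy} = Φ_{xy} μ*_{xy}/(Φᵀμ*), q*_x = n_x u*_x/(nᵀu* + mᵀv*), q*_y = m_y v*_y/(nᵀu* + mᵀv*) is a Nash equilibrium of the generalized hide-and-seek game with payoffs α_{xy} = λ_{xy}/(n_x Φ_{xy}), β_{xy} = 1/(2 n_x Φ_{xy}), γ_{xy} = (1−λ_{xy})/(m_y Φ_{xy}), κ_{xy} = 1/(2 m_y Φ_{xy}). -/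
/-- The pair (p*, q*) constructed from a stable outcome of the LTU
matching problem is a Nash equilibrium of the generalized hide-and-seek game. -/
theorem ltu_stable_gives_nash
    {X Y : Type*} [Fintype X] [Fintype Y] [Nonempty X] [Nonempty Y]
    (n : X → ℝ) (m : Y → ℝ) (lam Φ : X → Y → ℝ)
    (μ : X → Y → ℝ) (u : X → ℝ) (v : Y → ℝ)
    (hn : ∀ x, 0 < n x) (hm : ∀ y, 0 < m y)
    (hlam : ∀ x y, lam x y ∈ Set.Ioo (0 : ℝ) 1)
    (hΦ : ∀ x y, 0 < Φ x y)
    (hμ0 : ∀ x y, 0 ≤ μ x y) (hu0 : ∀ x, 0 ≤ u x) (hv0 : ∀ y, 0 ≤ v y)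
    (h1 : ∀ x y, lam x y * u x + (1 - lam x y) * v y ≥ Φ x y / 2)
    (h2 : ∀ x, ∑ y, μ x y ≤ n x)
    (h3 : ∀ y, ∑ x, μ x y ≤ m y)
    (h4 : ∀ x y, 0 < μ x y → lam x y * u x + (1 - lam x y) * v y = Φ x y / 2)
    (h5 : ∀ x, 0 < u x → ∑ y, μ x y = n x)
    (h6 : ∀ y, 0 < v y → ∑ x, μ x y = m y)
    -- expected loss of player 1 and expected payoff of player 2
    (ℓ π : (X × Y → ℝ) → (X ⊕ Y → ℝ) → ℝ)
    (hℓ : ∀ p q, ℓ p q = ∑ x, ∑ y, p (x, y) *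
      (q (Sum.inl x) * (lam x y / (n x * Φ x y)) +
       q (Sum.inr y) * ((1 - lam x y) / (m y * Φ x y))))
    (hπ : ∀ p q, π p q = ∑ x, ∑ y, p (x, y) *
      (q (Sum.inl x) * (1 / (2 * n x * Φ x y)) +
       q (Sum.inr y) * (1 / (2 * m y * Φ x y))))
    -- the strategies p*, q*
    (pstar : X × Y → ℝ) (qstar : X ⊕ Y → ℝ)
    (hp : ∀ z : X × Y, pstar z = Φ z.1 z.2 * μ z.1 z.2 / (∑ x, ∑ y, Φ x y * μ x y))
    (hq : qstar = Sum.elim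
      (fun x => n x * u x / ((∑ x, n x * u x) + (∑ y, m y * v y)))
      (fun y => m y * v y / ((∑ x, n x * u x) + (∑ y, m y * v y)))) :
    (∀ p : X × Y → ℝ, (∀ z, 0 ≤ p z) → (∑ z, p z) = 1 →
      ℓ pstar qstar ≤ ℓ p qstar) ∧
    (∀ q : X ⊕ Y → ℝ, (∀ z, 0 ≤ q z) → (∑ z, q z) = 1 →
      π pstar qstar ≥ π pstar q) := by
  classical
  set S : ℝ := ∑ x, ∑ y, Φ x y * μ x y with hSdef
  set T : ℝ := (∑ x, n x * u x) + (∑ y, m y * v y) with hTdef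
  -- positivity of T
  have hT : 0 < T := by
    obtain ⟨x0⟩ := ‹Nonempty X›
    obtain ⟨y0⟩ := ‹Nonempty Y›
    have h10 := h1 x0 y0
    have hl := hlam x0 y0
    have huv : 0 < u x0 ∨ 0 < v y0 := by
      by_contra h
      push_neg at h
      have hu : u x0 = 0 := le_antisymm h.1 (hu0 x0)
      have hv : v y0 = 0 := le_antisymm h.2 (hv0 y0)
      rw [hu, hv] at h10
      have := hΦ x0 y0
      simp at h10
      linarith
    have hA : 0 ≤ ∑ x, n x * u x :=
      Finset.sum_nonneg fun x _ => mul_nonneg (hn x).le (hu0 x)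
    have hB : 0 ≤ ∑ y, m y * v y :=
      Finset.sum_nonneg fun y _ => mul_nonneg (hm y).le (hv0 y)
    rcases huv with h' | h'
    · have : 0 < ∑ x, n x * u x := by
        refine Finset.sum_pos' (fun x _ => mul_nonneg (hn x).le (hu0 x)) ⟨x0, Finset.mem_univ _, mul_pos (hn x0) h'⟩
      linarith
    · have : 0 < ∑ y, m y * v y := by
        refine Finset.sum_pos' (fun y _ => mul_nonneg (hm y).le (hv0 y)) ⟨y0, Finset.mem_univ _, mul_pos (hm y0) h'⟩
      linarith
  -- positivity of S
  have hS : 0 < S := by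
    have hnonneg : ∀ x ∈ Finset.univ (α := X), 0 ≤ ∑ y, Φ x y * μ x y := fun x _ =>
      Finset.sum_nonneg fun y _ => mul_nonneg (hΦ x y).le (hμ0 x y)
    rcases (Finset.sum_nonneg hnonneg).lt_or_eq with h | h
    · exact h
    · exfalso
      -- all μ are zero
      have hμz : ∀ x y, μ x y = 0 := by
        have h' := h.symm
        have hall : ∀ x ∈ Finset.univ (α := X), ∑ y, Φ x y * μ x y = 0 :=
          (Finset.sum_eq_zero_iff_of_nonneg hnonneg).mp h'
        intro x y
        have hx := hall x (Finset.mem_univ x)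
        have hall2 : ∀ y ∈ Finset.univ (α := Y), Φ x y * μ x y = 0 :=
          (Finset.sum_eq_zero_iff_of_nonneg (fun y _ =>
            mul_nonneg (hΦ x y).le (hμ0 x y))).mp hx
        have := hall2 y (Finset.mem_univ y)
        rcases mul_eq_zero.mp this with h0 | h0
        · exact absurd h0 (hΦ x y).ne'
        · exact h0
      have huz : ∀ x, u x = 0 := by
        intro x
        by_contra h'
        have hux : 0 < u x := (hu0 x).lt_of_ne (Ne.symm h')
        have := h5 x hux
        have : (0 : ℝ) = n x := by
          rw [← this]; exact (Finset.sum_eq_zero fun y _ => hμz x y).symm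
        linarith [hn x]
      obtain ⟨x0⟩ := ‹Nonempty X›
      obtain ⟨y0⟩ := ‹Nonempty Y›
      have h10 := h1 x0 y0
      rw [huz x0] at h10
      have hvy : 0 < v y0 := by
        have hl := hlam x0 y0
        have := hΦ x0 y0
        nlinarith [hv0 y0, hl.1, hl.2]
      have := h6 y0 hvy
      have : (0 : ℝ) = m y0 := by
        rw [← this]; exact (Finset.sum_eq_zero fun x _ => hμz x y0).symm
      linarith [hm y0]
  have hSne : S ≠ 0 := hS.ne'
  have hTne : T ≠ 0 := hT.ne'
  -- key: μ * (lam u + (1-lam) v) = μ * Φ / 2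
  have hkey : ∀ x y, μ x y * (lam x y * u x + (1 - lam x y) * v y) = μ x y * (Φ x y / 2) := by
    intro x y
    rcases (hμ0 x y).lt_or_eq with h | h
    · rw [h4 x y h]
    · rw [← h]; ring
  -- qstar coefficient identity for ℓ
  have hcval : ∀ x y, qstar (Sum.inl x) * (lam x y / (n x * Φ x y)) +
      qstar (Sum.inr y) * ((1 - lam x y) / (m y * Φ x y)) =
      (lam x y * u x + (1 - lam x y) * v y) / (T * Φ x y) := by
    intro x y
    rw [hq]
    simp only [Sum.elim_inl, Sum.elim_inr, ← hTdef]
    have h1' := (hn x).ne'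
    have h2' := (hm y).ne'
    have h3' := (hΦ x y).ne'
    field_simp
  have hcge : ∀ x y, 1 / (2 * T) ≤
      (lam x y * u x + (1 - lam x y) * v y) / (T * Φ x y) := by
    intro x y
    have h1' := h1 x y
    have h3' := hΦ x y
    rw [div_le_div_iff₀ (by positivity) (by positivity)]
    nlinarith
  -- value of ℓ pstar qstar
  have hℓval : ℓ pstar qstar = 1 / (2 * T) := by
    rw [hℓ]
    have hterm : ∀ x y, pstar (x, y) *
        (qstar (Sum.inl x) * (lam x y / (n x * Φ x y)) +
         qstar (Sum.inr y) * ((1 - lam x y) / (m y * Φ x y))) =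
        (Φ x y * μ x y) * (1 / (2 * T * S)) := by
      intro x y
      rw [hcval x y, hp (x, y)]
      simp only [← hSdef]
      have h3' := (hΦ x y).ne'
      have hk := hkey x y
      rw [div_mul_div_comm, show Φ x y * μ x y * (lam x y * u x + (1 - lam x y) * v y) = Φ x y * (μ x y * (Φ x y / 2)) by rw [← hk]; ring]
      field_simp
    calc (∑ x, ∑ y, pstar (x, y) *
        (qstar (Sum.inl x) * (lam x y / (n x * Φ x y)) +
         qstar (Sum.inr y) * ((1 - lam x y) / (m y * Φ x y))))
        = ∑ x, ∑ y, (Φ x y * μ x y) * (1 / (2 * T * S)) := by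
          exact Finset.sum_congr rfl fun x _ => Finset.sum_congr rfl fun y _ => hterm x y
      _ = S * (1 / (2 * T * S)) := by
          simp only [← Finset.sum_mul]
          rw [hSdef]
      _ = 1 / (2 * T) := by field_simp
  constructor
  · intro p hp0 hp1
    rw [hℓval, hℓ]
    have hp1' : ∑ x, ∑ y, p (x, y) = 1 := by
      rw [← hp1, Fintype.sum_prod_type]
    calc (1 : ℝ) / (2 * T) = ∑ x, ∑ y, p (x, y) * (1 / (2 * T)) := by
          simp only [← Finset.sum_mul]
          rw [hp1', one_mul]
      _ ≤ _ := by
          refine Finset.sum_le_sum fun x _ => Finset.sum_le_sum fun y _ => ?_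
          refine mul_le_mul_of_nonneg_left ?_ (hp0 (x, y))
          rw [hcval x y]
          exact hcge x y
  · intro q hq0 hq1
    have hπq : ∀ q' : X ⊕ Y → ℝ, π pstar q' =
        ((∑ x, q' (Sum.inl x) / n x * ∑ y, μ x y) +
         (∑ y, q' (Sum.inr y) / m y * ∑ x, μ x y)) / (2 * S) := by
      intro q'
      rw [hπ]
      have hterm : ∀ x y, pstar (x, y) *
          (q' (Sum.inl x) * (1 / (2 * n x * Φ x y)) +
           q' (Sum.inr y) * (1 / (2 * m y * Φ x y))) =
          (q' (Sum.inl x) / n x * μ x y + q' (Sum.inr y) / m y * μ x y) / (2 * S) := by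
        intro x y
        rw [hp (x, y)]
        simp only [← hSdef]
        have e1 := (hΦ x y).ne'
        have e2 := (hn x).ne'
        have e3 := (hm y).ne'
        field_simp
      rw [Finset.sum_congr rfl fun x _ => Finset.sum_congr rfl fun y _ => hterm x y]
      simp only [add_div, Finset.sum_add_distrib, ← Finset.sum_div, ← Finset.mul_sum]
      congr 1
      rw [Finset.sum_comm]
      congr 1
      exact Finset.sum_congr rfl fun y _ => (Finset.mul_sum _ _ _).symm
    -- value at qstar
    have hval : π pstar qstar = 1 / (2 * S) := by
      rw [hπq qstar, hq]
      simp only [Sum.elim_inl, Sum.elim_inr, ← hTdef]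
      have hA : ∀ x, n x * u x / T / n x * ∑ y, μ x y = n x * u x / T := by
        intro x
        rcases (hu0 x).lt_or_eq with h | h
        · rw [h5 x h, div_mul_cancel₀ _ (hn x).ne']
        · rw [← h]; simp
      have hB : ∀ y, m y * v y / T / m y * ∑ x, μ x y = m y * v y / T := by
        intro y
        rcases (hv0 y).lt_or_eq with h | h
        · rw [h6 y h, div_mul_cancel₀ _ (hm y).ne']
        · rw [← h]; simp
      rw [Finset.sum_congr rfl fun x _ => hA x, Finset.sum_congr rfl fun y _ => hB y]
      rw [← Finset.sum_div, ← Finset.sum_div, ← add_div, ← hTdef]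
      field_simp
    rw [hval, hπq q, ge_iff_le]
    have hq1' : (∑ x, q (Sum.inl x)) + (∑ y, q (Sum.inr y)) = 1 := by
      rw [← hq1, Fintype.sum_sum_type]
    have hA : (∑ x, q (Sum.inl x) / n x * ∑ y, μ x y) ≤ ∑ x, q (Sum.inl x) := by
      refine Finset.sum_le_sum fun x _ => ?_
      have h0 : 0 ≤ q (Sum.inl x) / n x := div_nonneg (hq0 _) (hn x).le
      calc q (Sum.inl x) / n x * ∑ y, μ x y ≤ q (Sum.inl x) / n x * n x :=
            mul_le_mul_of_nonneg_left (h2 x) h0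
        _ = q (Sum.inl x) := div_mul_cancel₀ _ (hn x).ne'
    have hB : (∑ y, q (Sum.inr y) / m y * ∑ x, μ x y) ≤ ∑ y, q (Sum.inr y) := by
      refine Finset.sum_le_sum fun y _ => ?_
      have h0 : 0 ≤ q (Sum.inr y) / m y := div_nonneg (hq0 _) (hm y).le
      calc q (Sum.inr y) / m y * ∑ x, μ x y ≤ q (Sum.inr y) / m y * m y :=
            mul_le_mul_of_nonneg_left (h3 y) h0
        _ = q (Sum.inr y) := div_mul_cancel₀ _ (hm y).ne'
    calc ((∑ x, q (Sum.inl x) / n x * ∑ y, μ x y) +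
          (∑ y, q (Sum.inr y) / m y * ∑ x, μ x y)) / (2 * S)
        ≤ ((∑ x, q (Sum.inl x)) + (∑ y, q (Sum.inr y))) / (2 * S) := by
          gcongr
      _ = 1 / (2 * S) := by rw [hq1']
end

section
/- If (p*, q*) is a Nash equilibrium of the generalized hide-and-seek game, then the outcome (μ*, u*, v*) defined by μ*_{xy} = p*_{xy}/(2 Φ_{xy} π(p*,q*)), u*_x = q*_x/(2 n_x ℓ(p*,q*)), v*_y = q*_y/(2 m_y ℓ(p*,q*)) satisfies the no-blocking-pair condition λ_{xy} u*_x + (1−λ_{xy}) v*_y ≥ Φ_{xy}/2 for all x ∈ X, y ∈ Y, with equality whenever μ*_{xy} > 0. -/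
/-- The outcome recovered from a Nash equilibrium of the generalized
hide-and-seek game satisfies the no-blocking-pair condition, with equality on the
support of μ*. -/
theorem hide_seek_nash_no_blocking_pair
    {X Y : Type*} [Fintype X] [Fintype Y]
    (n : X → ℝ) (m : Y → ℝ) (lam Φ : X → Y → ℝ)
    (hn : ∀ x, 0 < n x) (hm : ∀ y, 0 < m y)
    (hlam : ∀ x y, lam x y ∈ Set.Ioo (0 : ℝ) 1)
    (hΦ : ∀ x y, 0 < Φ x y)
    (ℓ π : (X × Y → ℝ) → (X ⊕ Y → ℝ) → ℝ)
    (hℓ : ∀ p q, ℓ p q = ∑ x, ∑ y, p (x, y) *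
      (q (Sum.inl x) * (lam x y / (n x * Φ x y)) +
       q (Sum.inr y) * ((1 - lam x y) / (m y * Φ x y))))
    (hπ : ∀ p q, π p q = ∑ x, ∑ y, p (x, y) *
      (q (Sum.inl x) * (1 / (2 * n x * Φ x y)) +
       q (Sum.inr y) * (1 / (2 * m y * Φ x y))))
    (pstar : X × Y → ℝ) (qstar : X ⊕ Y → ℝ)
    (hp0 : ∀ z, 0 ≤ pstar z) (hp1 : (∑ z, pstar z) = 1)
    (hq0 : ∀ z, 0 ≤ qstar z) (hq1 : (∑ z, qstar z) = 1)
    (hNash1 : ∀ p : X × Y → ℝ, (∀ z, 0 ≤ p z) → (∑ z, p z) = 1 →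
      ℓ pstar qstar ≤ ℓ p qstar)
    (hNash2 : ∀ q : X ⊕ Y → ℝ, (∀ z, 0 ≤ q z) → (∑ z, q z) = 1 →
      π pstar qstar ≥ π pstar q)
    (hℓpos : 0 < ℓ pstar qstar) (hπpos : 0 < π pstar qstar)
    -- the recovered outcome
    (μ : X → Y → ℝ) (u : X → ℝ) (v : Y → ℝ)
    (hμ : ∀ x y, μ x y = pstar (x, y) / (2 * Φ x y * π pstar qstar))
    (hu : ∀ x, u x = qstar (Sum.inl x) / (2 * n x * ℓ pstar qstar))
    (hv : ∀ y, v y = qstar (Sum.inr y) / (2 * m y * ℓ pstar qstar)) :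
    (∀ x y, lam x y * u x + (1 - lam x y) * v y ≥ Φ x y / 2) ∧
    (∀ x y, 0 < μ x y → lam x y * u x + (1 - lam x y) * v y = Φ x y / 2) := by
  classical
  set L := ℓ pstar qstar with hL
  set c : X → Y → ℝ := fun x y =>
    qstar (Sum.inl x) * (lam x y / (n x * Φ x y)) +
    qstar (Sum.inr y) * ((1 - lam x y) / (m y * Φ x y)) with hc
  -- pure strategy bound: L ≤ c x y
  have hpure : ∀ x y, L ≤ c x y := by
    intro x y
    have h := hNash1 (fun z => if z = (x, y) then 1 else 0)
      (by intro z; split <;> norm_num)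
      (by simp)
    have heq : ℓ (fun z => if z = (x, y) then 1 else 0) qstar = c x y := by
      rw [hℓ]
      rw [Finset.sum_eq_single x]
      · rw [Finset.sum_eq_single y]
        · simp [hc]
        · intro b _ hb; simp [Prod.ext_iff, hb]
        · intro hy; exact absurd (Finset.mem_univ y) hy
      · intro a _ ha
        rw [Finset.sum_eq_zero]
        intro b _
        simp [Prod.ext_iff, ha]
      · intro hx; exact absurd (Finset.mem_univ x) hx
    rwa [heq] at h
  -- L = sum of pstar * c
  have hLsum : L = ∑ x, ∑ y, pstar (x, y) * c x y := by rw [hL, hℓ]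
  -- equal payoff on support
  have hsupp : ∀ x y, 0 < pstar (x, y) → c x y = L := by
    intro x y hpxy
    by_contra hne
    have hlt : L < c x y := lt_of_le_of_ne (hpure x y) (Ne.symm hne)
    have hsum1 : (∑ x, ∑ y, pstar (x, y)) = 1 := by
      rw [← hp1, ← Fintype.sum_prod_type]
    have hkey : (∑ x, ∑ y, pstar (x, y) * L) < ∑ x, ∑ y, pstar (x, y) * c x y := by
      apply Finset.sum_lt_sum
      · intro i _
        apply Finset.sum_le_sum
        intro j _
        exact mul_le_mul_of_nonneg_left (hpure i j) (hp0 _)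
      · refine ⟨x, Finset.mem_univ x, ?_⟩
        apply Finset.sum_lt_sum
        · intro j _
          exact mul_le_mul_of_nonneg_left (hpure x j) (hp0 _)
        · exact ⟨y, Finset.mem_univ y, by
            exact mul_lt_mul_of_pos_left hlt hpxy⟩
    rw [← hLsum] at hkey
    simp only [← Finset.sum_mul] at hkey
    rw [hsum1, one_mul] at hkey
    exact lt_irrefl _ hkey
  -- relation: lam*u + (1-lam)*v = Φ * c / (2L)
  have hform : ∀ x y, lam x y * u x + (1 - lam x y) * v y = Φ x y * c x y / (2 * L) := by
    intro x y
    rw [hu, hv, hc]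
    have hnx := (hn x).ne'
    have hmy := (hm y).ne'
    have hΦxy := (hΦ x y).ne'
    have hLne := hℓpos.ne'
    field_simp
  have hLne := hℓpos.ne'
  constructor
  · intro x y
    rw [hform x y]
    rw [ge_iff_le, div_le_div_iff₀ (by norm_num) (by positivity)]
    have := hpure x y
    nlinarith [hΦ x y, hℓpos]
  · intro x y hμpos
    have hpxy : 0 < pstar (x, y) := by
      rw [hμ] at hμpos
      by_contra hle
      push_neg at hle
      have : pstar (x, y) = 0 := le_antisymm hle (hp0 _)
      rw [this] at hμpos
      simp at hμpos
    rw [hform x y, hsupp x y hpxy]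
    field_simp
end

section
/- If (p*, q*) is a Nash equilibrium of the generalized hide-and-seek game, then μ*_{xy} = p*_{xy}/(2 Φ_{xy} π(p*,q*)) satisfies the population feasibility constraints Σ_y μ*_{xy} ≤ n_x for all x and Σ_x μ*_{xy} ≤ m_y for all y, with equality in the x-constraint whenever q*_x > 0 and in the y-constraint whenever q*_y > 0. -/
/-- The matching recovered from a Nash equilibrium of the generalized
hide-and-seek game satisfies the population feasibility constraints, with equality
whenever the corresponding pure strategy of player 2 has positive probability. -/
theorem hide_seek_nash_feasibility
    {X Y : Type*} [Fintype X] [Fintype Y] [DecidableEq X] [DecidableEq Y]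
    (n : X → ℝ) (m : Y → ℝ) (lam Φ : X → Y → ℝ)
    (hn : ∀ x, 0 < n x) (hm : ∀ y, 0 < m y)
    (hlam : ∀ x y, lam x y ∈ Set.Ioo (0 : ℝ) 1)
    (hΦ : ∀ x y, 0 < Φ x y)
    (π : (X × Y → ℝ) → (X ⊕ Y → ℝ) → ℝ)
    (hπ : ∀ p q, π p q = ∑ x, ∑ y, p (x, y) *
      (q (Sum.inl x) * (1 / (2 * n x * Φ x y)) +
       q (Sum.inr y) * (1 / (2 * m y * Φ x y))))
    (pstar : X × Y → ℝ) (qstar : X ⊕ Y → ℝ)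
    (hp0 : ∀ z, 0 ≤ pstar z) (hp1 : (∑ z, pstar z) = 1)
    (hq0 : ∀ z, 0 ≤ qstar z) (hq1 : (∑ z, qstar z) = 1)
    -- best-response conditions of player 2 against pure strategies,
    -- with the equal-payoff property on the support of qstar
    (hbr : ∀ z : X ⊕ Y, π pstar qstar ≥ π pstar (fun z' => if z' = z then 1 else 0))
    (heq : ∀ z : X ⊕ Y, 0 < qstar z →
      π pstar (fun z' => if z' = z then 1 else 0) = π pstar qstar)
    (hπpos : 0 < π pstar qstar)
    (μ : X → Y → ℝ)
    (hμ : ∀ x y, μ x y = pstar (x, y) / (2 * Φ x y * π pstar qstar)) :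
    (∀ x, ∑ y, μ x y ≤ n x) ∧
    (∀ y, ∑ x, μ x y ≤ m y) ∧
    (∀ x, 0 < qstar (Sum.inl x) → ∑ y, μ x y = n x) ∧
    (∀ y, 0 < qstar (Sum.inr y) → ∑ x, μ x y = m y) := by
  set P := π pstar qstar with hP
  -- payoff against pure strategy inl x0
  have keyX : ∀ x0 : X, π pstar (fun z' => if z' = Sum.inl x0 then 1 else 0)
      = ∑ y, pstar (x0, y) * (1 / (2 * n x0 * Φ x0 y)) := by
    intro x0
    rw [hπ]
    rw [Finset.sum_eq_single x0]
    · simp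
    · intro x _ hx
      simp [hx]
    · simp
  have keyY : ∀ y0 : Y, π pstar (fun z' => if z' = Sum.inr y0 then 1 else 0)
      = ∑ x, pstar (x, y0) * (1 / (2 * m y0 * Φ x y0)) := by
    intro y0
    rw [hπ, Finset.sum_comm]
    rw [Finset.sum_eq_single y0]
    · simp
    · intro y _ hy
      simp [hy]
    · simp
  have sumX : ∀ x0 : X, ∑ y, μ x0 y
      = n x0 * π pstar (fun z' => if z' = Sum.inl x0 then 1 else 0) / P := by
    intro x0
    rw [keyX, Finset.mul_sum, Finset.sum_div]
    refine Finset.sum_congr rfl fun y _ => ?_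
    rw [hμ]
    have h1 := (hΦ x0 y).ne'
    have h2 := (hn x0).ne'
    have h3 := hπpos.ne'
    field_simp
  have sumY : ∀ y0 : Y, ∑ x, μ x y0
      = m y0 * π pstar (fun z' => if z' = Sum.inr y0 then 1 else 0) / P := by
    intro y0
    rw [keyY, Finset.mul_sum, Finset.sum_div]
    refine Finset.sum_congr rfl fun x _ => ?_
    rw [hμ]
    have h1 := (hΦ x y0).ne'
    have h2 := (hm y0).ne'
    have h3 := hπpos.ne'
    field_simp
  refine ⟨fun x0 => ?_, fun y0 => ?_, fun x0 hx0 => ?_, fun y0 hy0 => ?_⟩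
  · rw [sumX, div_le_iff₀ hπpos]
    have := hbr (Sum.inl x0)
    nlinarith [hn x0]
  · rw [sumY, div_le_iff₀ hπpos]
    have := hbr (Sum.inr y0)
    nlinarith [hm y0]
  · rw [sumX, heq _ hx0, mul_div_assoc, div_self hπpos.ne', mul_one]
  · rw [sumY, heq _ hy0, mul_div_assoc, div_self hπpos.ne', mul_one]
end

section
/- If (p*, q*) is a Nash equilibrium of the generalized hide-and-seek game with payoffs α_{xy} = λ_{xy}/(n_x Φ_{xy}), β_{xy} = 1/(2 n_x Φ_{xy}), γ_{xy} = (1−λ_{xy})/(m_y Φ_{xy}), κ_{xy} = 1/(2 m_y Φ_{xy}), then the outcome (μ*, u*, v*) defined by μ*_{xy} = p*_{xy}/(2 Φ_{xy} π(p*,q*)), u*_x = q*_x/(2 n_x ℓ(p*,q*)), v*_y = q*_y/(2 m_y ℓ(p*,q*)) is a stable outcome of the LTU matching problem, i.e., it satisfies all six stability conditions. -/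
private lemma sum_indicator_mul {ι : Type*} [Fintype ι] [DecidableEq ι] (z : ι) (g : ι → ℝ) :
    ∑ w, (if w = z then (1:ℝ) else 0) * g w = g z := by
  simp [ite_mul]

private lemma sum_indicator_one {ι : Type*} [Fintype ι] [DecidableEq ι] (z : ι) :
    ∑ w, (if w = z then (1:ℝ) else 0) = 1 := by
  simp

/-- The outcome recovered from a Nash equilibrium of the generalized
hide-and-seek game is a stable outcome of the LTU matching problem (all six
stability conditions hold). -/
theorem hide_seek_nash_gives_stable
    {X Y : Type*} [Fintype X] [Fintype Y]
    (n : X → ℝ) (m : Y → ℝ) (lam Φ : X → Y → ℝ)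
    (hn : ∀ x, 0 < n x) (hm : ∀ y, 0 < m y)
    (hlam : ∀ x y, lam x y ∈ Set.Ioo (0 : ℝ) 1)
    (hΦ : ∀ x y, 0 < Φ x y)
    (ℓ π : (X × Y → ℝ) → (X ⊕ Y → ℝ) → ℝ)
    (hℓ : ∀ p q, ℓ p q = ∑ x, ∑ y, p (x, y) *
      (q (Sum.inl x) * (lam x y / (n x * Φ x y)) +
       q (Sum.inr y) * ((1 - lam x y) / (m y * Φ x y))))
    (hπ : ∀ p q, π p q = ∑ x, ∑ y, p (x, y) *
      (q (Sum.inl x) * (1 / (2 * n x * Φ x y)) +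
       q (Sum.inr y) * (1 / (2 * m y * Φ x y))))
    (pstar : X × Y → ℝ) (qstar : X ⊕ Y → ℝ)
    (hp0 : ∀ z, 0 ≤ pstar z) (hp1 : (∑ z, pstar z) = 1)
    (hq0 : ∀ z, 0 ≤ qstar z) (hq1 : (∑ z, qstar z) = 1)
    (hNash1 : ∀ p : X × Y → ℝ, (∀ z, 0 ≤ p z) → (∑ z, p z) = 1 →
      ℓ pstar qstar ≤ ℓ p qstar)
    (hNash2 : ∀ q : X ⊕ Y → ℝ, (∀ z, 0 ≤ q z) → (∑ z, q z) = 1 →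
      π pstar qstar ≥ π pstar q)
    -- the recovered outcome
    (μ : X → Y → ℝ) (u : X → ℝ) (v : Y → ℝ)
    (hμ : ∀ x y, μ x y = pstar (x, y) / (2 * Φ x y * π pstar qstar))
    (hu : ∀ x, u x = qstar (Sum.inl x) / (2 * n x * ℓ pstar qstar))
    (hv : ∀ y, v y = qstar (Sum.inr y) / (2 * m y * ℓ pstar qstar)) :
    (∀ x y, lam x y * u x + (1 - lam x y) * v y ≥ Φ x y / 2) ∧
    (∀ x, ∑ y, μ x y ≤ n x) ∧
    (∀ y, ∑ x, μ x y ≤ m y) ∧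
    (∀ x y, 0 < μ x y → lam x y * u x + (1 - lam x y) * v y = Φ x y / 2) ∧
    (∀ x, 0 < u x → ∑ y, μ x y = n x) ∧
    (∀ y, 0 < v y → ∑ x, μ x y = m y) := by
  classical
  set L := ℓ pstar qstar with hLdef
  set P := π pstar qstar with hPdef
  -- the "cost" of a pure hider strategy
  set c : X × Y → ℝ := fun w =>
    qstar (Sum.inl w.1) * (lam w.1 w.2 / (n w.1 * Φ w.1 w.2)) +
    qstar (Sum.inr w.2) * ((1 - lam w.1 w.2) / (m w.2 * Φ w.1 w.2)) with hc
  -- the "payoff" of a pure seeker strategy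
  set d : X ⊕ Y → ℝ := Sum.elim
    (fun x => ∑ y, pstar (x, y) * (1 / (2 * n x * Φ x y)))
    (fun y => ∑ x, pstar (x, y) * (1 / (2 * m y * Φ x y))) with hd
  -- also the π-cost per pure pair
  set g : X × Y → ℝ := fun w =>
    qstar (Sum.inl w.1) * (1 / (2 * n w.1 * Φ w.1 w.2)) +
    qstar (Sum.inr w.2) * (1 / (2 * m w.2 * Φ w.1 w.2)) with hg
  have hcnn : ∀ w, 0 ≤ c w := by
    intro w
    have h1 := (hlam w.1 w.2).1
    have h2 := (hlam w.1 w.2).2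
    have := hn w.1; have := hm w.2; have := hΦ w.1 w.2
    have := hq0 (Sum.inl w.1); have := hq0 (Sum.inr w.2)
    rw [hc]
    have : (0:ℝ) ≤ 1 - lam w.1 w.2 := by linarith
    positivity
  -- ℓ in single-sum form
  have hℓ' : ∀ p : X × Y → ℝ, ℓ p qstar = ∑ w, p w * c w := by
    intro p
    rw [hℓ, Fintype.sum_prod_type]
  -- π in single-sum (product) form
  have hπg : ∀ p : X × Y → ℝ, π p qstar = ∑ w, p w * g w := by
    intro p
    rw [hπ, Fintype.sum_prod_type]
  -- π in seeker-side form
  have hπ' : ∀ q : X ⊕ Y → ℝ, π pstar q = ∑ z, q z * d z := by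
    intro q
    rw [hπ, Fintype.sum_sum_type]
    have step : ∀ x : X,
        (∑ y, pstar (x, y) * (q (Sum.inl x) * (1 / (2 * n x * Φ x y)) +
          q (Sum.inr y) * (1 / (2 * m y * Φ x y))))
        = q (Sum.inl x) * (∑ y, pstar (x, y) * (1 / (2 * n x * Φ x y)))
          + ∑ y, q (Sum.inr y) * (pstar (x, y) * (1 / (2 * m y * Φ x y))) := by
      intro x
      rw [Finset.mul_sum, ← Finset.sum_add_distrib]
      exact Finset.sum_congr rfl fun y _ => by ring
    rw [Finset.sum_congr rfl fun x _ => step x, Finset.sum_add_distrib]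
    congr 1
    rw [Finset.sum_comm]
    exact Finset.sum_congr rfl fun y _ => by rw [← Finset.mul_sum, hd, Sum.elim_inr]
  -- pointwise lower bound for c
  have c_ge : ∀ w : X × Y, L ≤ c w := by
    intro w
    have h := hNash1 (fun z => if z = w then 1 else 0)
      (fun z => by split <;> norm_num) (sum_indicator_one w)
    rwa [hℓ', sum_indicator_mul] at h
  have hLsum : L = ∑ w, pstar w * c w := hℓ' pstar
  -- support equality for c
  have c_eq : ∀ w : X × Y, 0 < pstar w → c w = L := by
    intro w hw
    have h0 : ∑ z, pstar z * (c z - L) = 0 := by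
      have : ∑ z, pstar z * (c z - L) = (∑ z, pstar z * c z) - (∑ z, pstar z) * L := by
        rw [Finset.sum_mul, ← Finset.sum_sub_distrib]
        exact Finset.sum_congr rfl fun z _ => by ring
      rw [this, ← hLsum, hp1, one_mul, sub_self]
    have hterm := (Finset.sum_eq_zero_iff_of_nonneg
      (fun z _ => mul_nonneg (hp0 z) (by linarith [c_ge z]))).mp h0 w (Finset.mem_univ w)
    rcases mul_eq_zero.mp hterm with h | h
    · exact absurd h (ne_of_gt hw)
    · linarith
  -- pointwise upper bound for d
  have d_le : ∀ z : X ⊕ Y, d z ≤ P := by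
    intro z
    have h := hNash2 (fun w => if w = z then 1 else 0)
      (fun w => by split <;> norm_num) (sum_indicator_one z)
    rwa [hπ', sum_indicator_mul] at h
  have hPsum : P = ∑ z, qstar z * d z := hπ' qstar
  have d_eq : ∀ z : X ⊕ Y, 0 < qstar z → d z = P := by
    intro z hz
    have h0 : ∑ w, qstar w * (P - d w) = 0 := by
      have : ∑ w, qstar w * (P - d w) = (∑ w, qstar w) * P - ∑ w, qstar w * d w := by
        rw [Finset.sum_mul, ← Finset.sum_sub_distrib]
        exact Finset.sum_congr rfl fun w _ => by ring
      rw [this, hq1, one_mul, ← hPsum, sub_self]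
    have hterm := (Finset.sum_eq_zero_iff_of_nonneg
      (fun w _ => mul_nonneg (hq0 w) (by linarith [d_le w]))).mp h0 z (Finset.mem_univ z)
    rcases mul_eq_zero.mp hterm with h | h
    · exact absurd h (ne_of_gt hz)
    · linarith
  -- some pair has positive probability
  have hex : ∃ w : X × Y, 0 < pstar w := by
    by_contra h
    push_neg at h
    have : ∑ w, pstar w = 0 :=
      Finset.sum_eq_zero fun w _ => le_antisymm (h w) (hp0 w)
    rw [hp1] at this; norm_num at this
  obtain ⟨⟨x0, y0⟩, hw0⟩ := hex
  -- positivity of P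
  have hPpos : 0 < P := by
    have h1 : 0 < d (Sum.inl x0) := by
      rw [hd, Sum.elim_inl]
      have hterm : 0 < pstar (x0, y0) * (1 / (2 * n x0 * Φ x0 y0)) := by
        have := hn x0; have := hΦ x0 y0
        positivity
      calc 0 < pstar (x0, y0) * (1 / (2 * n x0 * Φ x0 y0)) := hterm
        _ ≤ ∑ y, pstar (x0, y) * (1 / (2 * n x0 * Φ x0 y)) := by
            apply Finset.single_le_sum (f := fun y => pstar (x0, y) * (1 / (2 * n x0 * Φ x0 y)))
              (fun y _ => ?_) (Finset.mem_univ y0)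
            have := hn x0; have := hΦ x0 y; have := hp0 (x0, y)
            positivity
    exact lt_of_lt_of_le h1 (d_le (Sum.inl x0))
  -- positivity of L
  have hL0 : 0 ≤ L := by
    rw [hLsum]
    exact Finset.sum_nonneg fun w _ => mul_nonneg (hp0 w) (hcnn w)
  have hLpos : 0 < L := by
    rcases hL0.lt_or_eq with h | h
    · exact h
    · exfalso
      have hall := (Finset.sum_eq_zero_iff_of_nonneg
        (fun w _ => mul_nonneg (hp0 w) (hcnn w))).mp (by rw [← hLsum, ← h])
      have hPzero : P = 0 := by
        rw [hPdef, hπg pstar]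
        apply Finset.sum_eq_zero
        intro w _
        rcases mul_eq_zero.mp (hall w (Finset.mem_univ w)) with hpw | hcw
        · rw [hpw, zero_mul]
        · -- c w = 0 forces both qstar components to vanish
          have h1 := (hlam w.1 w.2).1
          have h2 := (hlam w.1 w.2).2
          have hnx := hn w.1; have hmy := hm w.2; have hphi := hΦ w.1 w.2
          have ht1 : 0 ≤ qstar (Sum.inl w.1) * (lam w.1 w.2 / (n w.1 * Φ w.1 w.2)) := by
            have := hq0 (Sum.inl w.1); positivity
          have ht2 : 0 ≤ qstar (Sum.inr w.2) * ((1 - lam w.1 w.2) / (m w.2 * Φ w.1 w.2)) := by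
            have := hq0 (Sum.inr w.2)
            have : (0:ℝ) ≤ 1 - lam w.1 w.2 := by linarith
            positivity
          rw [hc] at hcw
          simp only at hcw
          have e1 : qstar (Sum.inl w.1) * (lam w.1 w.2 / (n w.1 * Φ w.1 w.2)) = 0 := by
            linarith
          have e2 : qstar (Sum.inr w.2) * ((1 - lam w.1 w.2) / (m w.2 * Φ w.1 w.2)) = 0 := by
            linarith
          have hq1' : qstar (Sum.inl w.1) = 0 := by
            rcases mul_eq_zero.mp e1 with h' | h'
            · exact h'
            · exfalso
              have : 0 < lam w.1 w.2 / (n w.1 * Φ w.1 w.2) := by positivity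
              linarith
          have hq2' : qstar (Sum.inr w.2) = 0 := by
            rcases mul_eq_zero.mp e2 with h' | h'
            · exact h'
            · exfalso
              have : 0 < (1 - lam w.1 w.2) / (m w.2 * Φ w.1 w.2) := by
                have : (0:ℝ) < 1 - lam w.1 w.2 := by linarith
                positivity
              linarith
          rw [hg]
          simp only [hq1', hq2', zero_mul, add_zero, mul_zero]
      rw [hPzero] at hPpos; norm_num at hPpos
  have hLne : L ≠ 0 := ne_of_gt hLpos
  have hPne : P ≠ 0 := ne_of_gt hPpos
  -- the key algebraic identity for condition 1 / 4
  have key : ∀ x y, lam x y * u x + (1 - lam x y) * v y = Φ x y * c (x, y) / (2 * L) := by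
    intro x y
    rw [hu, hv, hc]
    have hnx := (hn x).ne'
    have hmy := (hm y).ne'
    have hphi := (hΦ x y).ne'
    field_simp
  have halfeq : ∀ x y, Φ x y * L / (2 * L) = Φ x y / 2 := by
    intro x y
    rw [mul_div_mul_right _ _ hLne]
  -- sum identity for conditions 2 / 5
  have rowsum : ∀ x, ∑ y, μ x y = n x * d (Sum.inl x) / P := by
    intro x
    rw [hd, Sum.elim_inl, Finset.mul_sum, Finset.sum_div]
    apply Finset.sum_congr rfl
    intro y _
    rw [hμ]
    have hnx := (hn x).ne'
    have hphi := (hΦ x y).ne'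
    field_simp
  have colsum : ∀ y, ∑ x, μ x y = m y * d (Sum.inr y) / P := by
    intro y
    rw [hd, Sum.elim_inr, Finset.mul_sum, Finset.sum_div]
    apply Finset.sum_congr rfl
    intro x _
    rw [hμ]
    have hmy := (hm y).ne'
    have hphi := (hΦ x y).ne'
    field_simp
  have dnn : ∀ z, 0 ≤ d z := by
    intro z
    rw [hd]
    cases z with
    | inl x =>
      simp only [Sum.elim_inl]
      exact Finset.sum_nonneg fun y _ => by
        have := hn x; have := hΦ x y; have := hp0 (x, y); positivity
    | inr y =>
      simp only [Sum.elim_inr]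
      exact Finset.sum_nonneg fun x _ => by
        have := hm y; have := hΦ x y; have := hp0 (x, y); positivity
  refine ⟨?_, ?_, ?_, ?_, ?_, ?_⟩
  · -- condition 1
    intro x y
    rw [ge_iff_le, key x y, ← halfeq x y]
    gcongr
    · exact (hΦ x y).le
    · exact c_ge (x, y)
  · -- condition 2
    intro x
    rw [rowsum x, div_le_iff₀ hPpos]
    have := d_le (Sum.inl x)
    nlinarith [hn x]
  · -- condition 3
    intro y
    rw [colsum y, div_le_iff₀ hPpos]
    have := d_le (Sum.inr y)
    nlinarith [hm y]
  · -- condition 4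
    intro x y hμpos
    have hppos : 0 < pstar (x, y) := by
      by_contra h
      push_neg at h
      have hzero : pstar (x, y) = 0 := le_antisymm h (hp0 (x, y))
      rw [hμ, hzero, zero_div] at hμpos
      exact lt_irrefl 0 hμpos
    rw [key x y, c_eq (x, y) hppos, halfeq x y]
  · -- condition 5
    intro x hux
    have hqpos : 0 < qstar (Sum.inl x) := by
      by_contra h
      push_neg at h
      have hzero : qstar (Sum.inl x) = 0 := le_antisymm h (hq0 (Sum.inl x))
      rw [hu, hzero, zero_div] at hux
      exact lt_irrefl 0 hux
    rw [rowsum x, d_eq (Sum.inl x) hqpos, mul_div_assoc, div_self hPne, mul_one]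
  · -- condition 6
    intro y hvy
    have hqpos : 0 < qstar (Sum.inr y) := by
      by_contra h
      push_neg at h
      have hzero : qstar (Sum.inr y) = 0 := le_antisymm h (hq0 (Sum.inr y))
      rw [hv, hzero, zero_div] at hvy
      exact lt_irrefl 0 hvy
    rw [colsum y, d_eq (Sum.inr y) hqpos, mul_div_assoc, div_self hPne, mul_one]
end

section
/- For a stable outcome (μ*, u*, v*) of the LTU matching problem and the corresponding Nash equilibrium (p*, q*) of the generalized hide-and-seek game given by p*_{xy} = Φ_{xy} μ*_{xy}/(Φᵀμ*), q*_x = n_x u*_x/(nᵀu* + mᵀv*), q*_y = m_y v*_y/(nᵀu* + mᵀv*), the equilibrium values satisfy π(p*, q*) = 1/(2 Φᵀμ*) and ℓ(p*, q*) = 1/(2(nᵀu* + mᵀv*)). Consequently, the maps (μ*, u*, v*) ↦ (p*, q*) and (p*, q*) ↦ (μ*, u*, v*) given by μ*_{xy} = p*_{xy}/(2 Φ_{xy} π(p*,q*)), u*_x = q*_x/(2 n_x ℓ(p*,q*)), v*_y = q*_y/(2 m_y ℓ(p*,q*)) are mutually inverse. -/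
/-- For a stable outcome and the associated equilibrium strategies,
the equilibrium values are π(p*,q*) = 1/(2Φᵀμ*) and ℓ(p*,q*) = 1/(2(nᵀu*+mᵀv*)),
and the maps between stable outcomes and equilibrium strategies are mutually
inverse. -/
theorem ltu_hide_seek_values_and_inverse
    {X Y : Type*} [Fintype X] [Fintype Y] [Nonempty X] [Nonempty Y]
    (n : X → ℝ) (m : Y → ℝ) (lam Φ : X → Y → ℝ)
    (μ : X → Y → ℝ) (u : X → ℝ) (v : Y → ℝ)
    (hn : ∀ x, 0 < n x) (hm : ∀ y, 0 < m y)
    (hlam : ∀ x y, lam x y ∈ Set.Ioo (0 : ℝ) 1)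
    (hΦ : ∀ x y, 0 < Φ x y)
    (hμ0 : ∀ x y, 0 ≤ μ x y) (hu0 : ∀ x, 0 ≤ u x) (hv0 : ∀ y, 0 ≤ v y)
    (h1 : ∀ x y, lam x y * u x + (1 - lam x y) * v y ≥ Φ x y / 2)
    (h2 : ∀ x, ∑ y, μ x y ≤ n x)
    (h3 : ∀ y, ∑ x, μ x y ≤ m y)
    (h4 : ∀ x y, 0 < μ x y → lam x y * u x + (1 - lam x y) * v y = Φ x y / 2)
    (h5 : ∀ x, 0 < u x → ∑ y, μ x y = n x)
    (h6 : ∀ y, 0 < v y → ∑ x, μ x y = m y)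
    (ℓ π : (X × Y → ℝ) → (X ⊕ Y → ℝ) → ℝ)
    (hℓ : ∀ p q, ℓ p q = ∑ x, ∑ y, p (x, y) *
      (q (Sum.inl x) * (lam x y / (n x * Φ x y)) +
       q (Sum.inr y) * ((1 - lam x y) / (m y * Φ x y))))
    (hπ : ∀ p q, π p q = ∑ x, ∑ y, p (x, y) *
      (q (Sum.inl x) * (1 / (2 * n x * Φ x y)) +
       q (Sum.inr y) * (1 / (2 * m y * Φ x y))))
    (pstar : X × Y → ℝ) (qstar : X ⊕ Y → ℝ)
    (hp : ∀ z : X × Y, pstar z = Φ z.1 z.2 * μ z.1 z.2 / (∑ x, ∑ y, Φ x y * μ x y))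
    (hq : qstar = Sum.elim
      (fun x => n x * u x / ((∑ x, n x * u x) + (∑ y, m y * v y)))
      (fun y => m y * v y / ((∑ x, n x * u x) + (∑ y, m y * v y)))) :
    π pstar qstar = 1 / (2 * ∑ x, ∑ y, Φ x y * μ x y) ∧
    ℓ pstar qstar = 1 / (2 * ((∑ x, n x * u x) + (∑ y, m y * v y))) ∧
    -- round trip: applying the inverse map recovers the stable outcome
    (∀ x y, μ x y = pstar (x, y) / (2 * Φ x y * π pstar qstar)) ∧
    (∀ x, u x = qstar (Sum.inl x) / (2 * n x * ℓ pstar qstar)) ∧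
    (∀ y, v y = qstar (Sum.inr y) / (2 * m y * ℓ pstar qstar)) := by
  classical
  set S := ∑ x, ∑ y, Φ x y * μ x y with hSdef
  set T := (∑ x, n x * u x) + (∑ y, m y * v y) with hTdef
  have hnuNN : ∀ x ∈ Finset.univ, (0:ℝ) ≤ n x * u x :=
    fun x _ => mul_nonneg (hn x).le (hu0 x)
  have hmvNN : ∀ y ∈ Finset.univ, (0:ℝ) ≤ m y * v y :=
    fun y _ => mul_nonneg (hm y).le (hv0 y)
  have hSum1 : (0:ℝ) ≤ ∑ x, n x * u x := Finset.sum_nonneg hnuNN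
  have hSum2 : (0:ℝ) ≤ ∑ y, m y * v y := Finset.sum_nonneg hmvNN
  have hTpos : 0 < T := by
    rcases (add_nonneg hSum1 hSum2).lt_or_eq with h | h
    · exact h
    · exfalso
      have h10 : ∑ x, n x * u x = 0 := by linarith
      have h20 : ∑ y, m y * v y = 0 := by linarith
      obtain ⟨x⟩ := (inferInstance : Nonempty X)
      obtain ⟨y⟩ := (inferInstance : Nonempty Y)
      have hux : u x = 0 := by
        have := (Finset.sum_eq_zero_iff_of_nonneg hnuNN).1 h10 x (Finset.mem_univ x)
        exact (mul_eq_zero.1 this).resolve_left (hn x).ne'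
      have hvy : v y = 0 := by
        have := (Finset.sum_eq_zero_iff_of_nonneg hmvNN).1 h20 y (Finset.mem_univ y)
        exact (mul_eq_zero.1 this).resolve_left (hm y).ne'
      have := h1 x y
      rw [hux, hvy] at this
      have := (hΦ x y)
      linarith
  have hΦμNN : ∀ x y, (0:ℝ) ≤ Φ x y * μ x y :=
    fun x y => mul_nonneg (hΦ x y).le (hμ0 x y)
  have hSpos : 0 < S := by
    have hS0 : (0:ℝ) ≤ S :=
      Finset.sum_nonneg fun x _ => Finset.sum_nonneg fun y _ => hΦμNN x y
    rcases hS0.lt_or_eq with h | h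
    · exact h
    · exfalso
      have hμz : ∀ x y, μ x y = 0 := by
        intro x y
        have hrow := (Finset.sum_eq_zero_iff_of_nonneg
          (fun x _ => Finset.sum_nonneg fun y _ => hΦμNN x y)).1 h.symm x (Finset.mem_univ x)
        have := (Finset.sum_eq_zero_iff_of_nonneg
          (fun y _ => hΦμNN x y)).1 hrow y (Finset.mem_univ y)
        exact (mul_eq_zero.1 this).resolve_left (hΦ x y).ne'
      have huz : ∀ x, u x = 0 := by
        intro x
        by_contra hne
        have hupos : 0 < u x := lt_of_le_of_ne (hu0 x) (Ne.symm hne)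
        have := h5 x hupos
        simp [hμz] at this
        exact absurd this.symm (hn x).ne'
      have hvz : ∀ y, v y = 0 := by
        intro y
        by_contra hne
        have hvpos : 0 < v y := lt_of_le_of_ne (hv0 y) (Ne.symm hne)
        have := h6 y hvpos
        simp [hμz] at this
        exact absurd this.symm (hm y).ne'
      rw [hTdef] at hTpos
      simp [huz, hvz] at hTpos
  -- key sum identities
  have hB : ∑ x, ∑ y, μ x y * u x = ∑ x, n x * u x := by
    refine Finset.sum_congr rfl fun x _ => ?_
    rw [← Finset.sum_mul]
    rcases (hu0 x).lt_or_eq with hpos | hzero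
    · rw [h5 x hpos]
    · rw [← hzero, mul_zero, mul_zero]
  have hC : ∑ x, ∑ y, μ x y * v y = ∑ y, m y * v y := by
    rw [Finset.sum_comm]
    refine Finset.sum_congr rfl fun y _ => ?_
    rw [← Finset.sum_mul]
    rcases (hv0 y).lt_or_eq with hpos | hzero
    · rw [h6 y hpos]
    · rw [← hzero, mul_zero, mul_zero]
  have hμuv : ∑ x, ∑ y, μ x y * (u x + v y) = T := by
    rw [hTdef, ← hB, ← hC, ← Finset.sum_add_distrib]
    refine Finset.sum_congr rfl fun x _ => ?_
    rw [← Finset.sum_add_distrib]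
    exact Finset.sum_congr rfl fun y _ => by ring
  have hA : ∑ x, ∑ y, μ x y * (lam x y * u x + (1 - lam x y) * v y) = S / 2 := by
    rw [hSdef, Finset.sum_div]
    refine Finset.sum_congr rfl fun x _ => ?_
    rw [Finset.sum_div]
    refine Finset.sum_congr rfl fun y _ => ?_
    rcases (hμ0 x y).lt_or_eq with hpos | hzero
    · rw [h4 x y hpos]; ring
    · rw [← hzero]; ring
  -- value of π
  have hπval : π pstar qstar = 1 / (2 * S) := by
    rw [hπ]
    have hterm : ∀ x y, pstar (x, y) *
        (qstar (Sum.inl x) * (1 / (2 * n x * Φ x y)) +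
         qstar (Sum.inr y) * (1 / (2 * m y * Φ x y))) =
        μ x y * (u x + v y) / (2 * S * T) := by
      intro x y
      rw [hp (x, y), hq]
      simp only [Sum.elim_inl, Sum.elim_inr]
      have h1 := (hn x).ne'
      have h2 := (hm y).ne'
      have h3 := (hΦ x y).ne'
      have h4 := hSpos.ne'
      have h5 := hTpos.ne'
      field_simp
    calc ∑ x, ∑ y, pstar (x, y) *
        (qstar (Sum.inl x) * (1 / (2 * n x * Φ x y)) +
         qstar (Sum.inr y) * (1 / (2 * m y * Φ x y)))
        = ∑ x, ∑ y, μ x y * (u x + v y) / (2 * S * T) := by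
          exact Finset.sum_congr rfl fun x _ => Finset.sum_congr rfl fun y _ => hterm x y
      _ = (∑ x, ∑ y, μ x y * (u x + v y)) / (2 * S * T) := by
          rw [Finset.sum_div]
          exact Finset.sum_congr rfl fun x _ => (Finset.sum_div _ _ _).symm
      _ = T / (2 * S * T) := by rw [hμuv]
      _ = 1 / (2 * S) := by
          field_simp
  -- value of ℓ
  have hℓval : ℓ pstar qstar = 1 / (2 * T) := by
    rw [hℓ]
    have hterm : ∀ x y, pstar (x, y) *
        (qstar (Sum.inl x) * (lam x y / (n x * Φ x y)) +
         qstar (Sum.inr y) * ((1 - lam x y) / (m y * Φ x y))) =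
        μ x y * (lam x y * u x + (1 - lam x y) * v y) / (S * T) := by
      intro x y
      rw [hp (x, y), hq]
      simp only [Sum.elim_inl, Sum.elim_inr]
      have h1 := (hn x).ne'
      have h2 := (hm y).ne'
      have h3 := (hΦ x y).ne'
      have h4 := hSpos.ne'
      have h5 := hTpos.ne'
      field_simp
    calc ∑ x, ∑ y, pstar (x, y) *
        (qstar (Sum.inl x) * (lam x y / (n x * Φ x y)) +
         qstar (Sum.inr y) * ((1 - lam x y) / (m y * Φ x y)))
        = ∑ x, ∑ y, μ x y * (lam x y * u x + (1 - lam x y) * v y) / (S * T) := by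
          exact Finset.sum_congr rfl fun x _ => Finset.sum_congr rfl fun y _ => hterm x y
      _ = (∑ x, ∑ y, μ x y * (lam x y * u x + (1 - lam x y) * v y)) / (S * T) := by
          rw [Finset.sum_div]
          exact Finset.sum_congr rfl fun x _ => (Finset.sum_div _ _ _).symm
      _ = (S / 2) / (S * T) := by rw [hA]
      _ = 1 / (2 * T) := by
          field_simp
  refine ⟨hπval, hℓval, ?_, ?_, ?_⟩
  · intro x y
    rw [hπval, hp (x, y)]
    have h3 := (hΦ x y).ne'
    have h4 := hSpos.ne'
    field_simp
  · intro x
    rw [hℓval, hq]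
    simp only [Sum.elim_inl]
    have h1 := (hn x).ne'
    have h5 := hTpos.ne'
    field_simp
  · intro y
    rw [hℓval, hq]
    simp only [Sum.elim_inr]
    have h2 := (hm y).ne'
    have h5 := hTpos.ne'
    field_simp
end

section
/- A LTU matching problem has the TU property if and only if for all x, x' ∈ X and y, y' ∈ Y, (ω_{xy} · ω_{x'y'}) / (ω_{x'y} · ω_{xy'}) = 1, where ω_{xy} = λ_{xy}/(1−λ_{xy}). -/
/-- An LTU matching problem has the TU property iff the cross-ratio
condition on the odds ratios ω_{xy} = λ_{xy}/(1−λ_{xy}) holds. -/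
theorem tu_property_iff_cross_ratio
    {X Y : Type*} [Fintype X] [Fintype Y]
    (lam : X → Y → ℝ)
    (hlam : ∀ x y, lam x y ∈ Set.Ioo (0 : ℝ) 1) :
    (∃ (a : X → ℝ) (b : Y → ℝ), (∀ x, 0 < a x) ∧ (∀ y, 0 < b y) ∧
      ∀ x y, lam x y = a x / (a x + b y)) ↔
    (∀ x x' y y',
      (lam x y / (1 - lam x y)) * (lam x' y' / (1 - lam x' y')) /
        ((lam x' y / (1 - lam x' y)) * (lam x y' / (1 - lam x y'))) = 1) := by
  have hω : ∀ x y, 0 < lam x y / (1 - lam x y) := fun x y =>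
    div_pos (hlam x y).1 (by linarith [(hlam x y).2])
  constructor
  · rintro ⟨a, b, ha, hb, h⟩ x x' y y'
    have key : ∀ x y, lam x y / (1 - lam x y) = a x / b y := by
      intro x y
      have hab : (0:ℝ) < a x + b y := by linarith [ha x, hb y]
      rw [h x y]
      rw [div_eq_div_iff (by rw [← h x y]; linarith [(hlam x y).2]) (hb y).ne']
      field_simp
      ring
    rw [key, key, key, key]
    have := (ha x).ne'
    have := (ha x').ne'
    have := (hb y).ne'
    have := (hb y').ne'
    field_simp
  · intro hcr
    by_cases hX : Nonempty X
    · by_cases hY : Nonempty Y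
      · obtain ⟨x0⟩ := hX
        obtain ⟨y0⟩ := hY
        set ω : X → Y → ℝ := fun x y => lam x y / (1 - lam x y) with hωdef
        refine ⟨fun x => ω x y0, fun y => ω x0 y0 / ω x0 y, fun x => hω x y0,
          fun y => div_pos (hω x0 y0) (hω x0 y), fun x y => ?_⟩
        have key : ω x y = ω x y0 / (ω x0 y0 / ω x0 y) := by
          have hB : (0:ℝ) < ω x0 y * ω x y0 := mul_pos (hω x0 y) (hω x y0)
          have h2 : ω x y * ω x0 y0 = ω x0 y * ω x y0 :=
            (div_eq_one_iff_eq hB.ne').mp (hcr x x0 y y0)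
          rw [div_div_eq_mul_div, eq_div_iff (hω x0 y0).ne']
          linear_combination h2
        have h1 : 1 - lam x y ≠ 0 := by linarith [(hlam x y).2]
        have hb' : 0 < ω x0 y0 / ω x0 y := div_pos (hω x0 y0) (hω x0 y)
        have hsum : 0 < ω x y0 + ω x0 y0 / ω x0 y := by linarith [hω x y0]
        -- from ω x y = a/b with a,b>0, derive lam x y = a/(a+b)
        have : lam x y / (1 - lam x y) = ω x y0 / (ω x0 y0 / ω x0 y) := key
        rw [div_eq_div_iff h1 hb'.ne'] at this
        rw [eq_div_iff hsum.ne']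
        linear_combination this
      · exact ⟨fun _ => 1, fun _ => 1, fun _ => one_pos, fun _ => one_pos,
          fun x y => (hY ⟨y⟩).elim⟩
    · exact ⟨fun _ => 1, fun _ => 1, fun _ => one_pos, fun _ => one_pos,
        fun x y => (hX ⟨x⟩).elim⟩
end

section
/- In the 2×2 LTU example with feasibility constraints u₁ + 2v₁ = 1 (match 11), 2u₁ + v₂ = 1 (match 12), u₂ + v₁ = 1 (match 21), u₂ + v₂ = 1 (match 22), and one agent of each type (n₁ = n₂ = m₁ = m₂ = 1), both of the following outcomes are stable: (A) μ₁₁ = μ₂₂ = 1 (other μ = 0), u₁ = u₂ = 1, v₁ = v₂ = 0; and (B) μ₁₂ = μ₂₁ = 1 (other μ = 0), u₁ = u₂ = 0, v₁ = v₂ = 1. However, the exchanged outcome (μ from B, utilities from A) is not stable: it violates condition (4), since μ₁₂ > 0 but 2u₁ + v₂ = 2 ≠ 1. -/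
/-- Stability for the 2×2 LTU example with within-match feasibility constraints
u₁ + 2v₁ = 1, 2u₁ + v₂ = 1, u₂ + v₁ = 1, u₂ + v₂ = 1 and unit masses.
`cu x y` (resp. `cv x y`) is the coefficient on the worker's (resp. employer's)
utility in the constraint of match (x,y), whose right-hand side is 1. -/
def ExampleStable (μ : Fin 2 → Fin 2 → ℝ) (u v : Fin 2 → ℝ) : Prop :=
  let cu : Fin 2 → Fin 2 → ℝ := !![1, 2; 1, 1]
  let cv : Fin 2 → Fin 2 → ℝ := !![2, 1; 1, 1]
  (∀ x y, 0 ≤ μ x y) ∧ (∀ x, 0 ≤ u x) ∧ (∀ y, 0 ≤ v y) ∧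
  (∀ x y, cu x y * u x + cv x y * v y ≥ 1) ∧
  (∀ x, ∑ y, μ x y ≤ 1) ∧ (∀ y, ∑ x, μ x y ≤ 1) ∧
  (∀ x y, 0 < μ x y → cu x y * u x + cv x y * v y = 1) ∧
  (∀ x, 0 < u x → ∑ y, μ x y = 1) ∧ (∀ y, 0 < v y → ∑ x, μ x y = 1)

/-- In the 2×2 LTU example, the outcomes A (diagonal matching,
u = (1,1), v = (0,0)) and B (antidiagonal matching, u = (0,0), v = (1,1)) are
both stable, but the exchanged outcome (matching of B with utilities of A) is
not stable. -/
theorem ltu_example_nonexchangeable :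
    ExampleStable (fun x y => !![(1:ℝ), 0; 0, 1] x y) ![1, 1] ![0, 0] ∧
    ExampleStable (fun x y => !![(0:ℝ), 1; 1, 0] x y) ![0, 0] ![1, 1] ∧
    ¬ ExampleStable (fun x y => !![(0:ℝ), 1; 1, 0] x y) ![1, 1] ![0, 0] := by
  refine ⟨⟨?_, ?_, ?_, ?_, ?_, ?_, ?_, ?_, ?_⟩, ⟨?_, ?_, ?_, ?_, ?_, ?_, ?_, ?_, ?_⟩, ?_⟩ <;>
    simp [Fin.forall_fin_two, Fin.sum_univ_two, Matrix.cons_val_zero, Matrix.cons_val_one] <;>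
    norm_num
  intro h
  obtain ⟨_, _, _, _, _, _, h7, _, _⟩ := h
  have := h7 0 1 (by norm_num)
  norm_num at this
end

section
/- In the many-to-one LTU matching model, if (μ*, u*) is a stable outcome with all Φ_a > 0, then defining p*_a = Φ_a μ*_a/(Φᵀμ*) and q*_x = n_x u*_x/(nᵀu*), the expected loss of player 1 in the N-dimensional hide-and-seek game satisfies ℓ(p, q*) ≥ 1/(nᵀu*) for every probability distribution p on A, with equality at p = p*; hence p* is a best response to q*. -/
/-- In the many-to-one LTU model, for a stable outcome (μ*, u*),
the strategy p* is a best response to q* in the N-dimensional hide-and-seek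
game: every p yields expected loss at least 1/(nᵀu*), with equality at p*. -/
theorem many_to_one_player1_best_response
    {X : Type*} [Fintype X] [DecidableEq X] [Nonempty X]
    {N : ℕ} {A : Type*} [Fintype A]
    (memb : A → Fin N → Option X)
    (lam : A → Fin N → ℝ) (Φ : A → ℝ) (n : X → ℝ)
    (μ : A → ℝ) (u : X → ℝ)
    (hn : ∀ x, 0 < n x) (hΦ : ∀ a, 0 < Φ a)
    (hlam0 : ∀ a i, 0 ≤ lam a i)
    (hlam1 : ∀ a, ∑ i, lam a i = 1)
    (hlamnone : ∀ a i, lam a i = 0 ↔ memb a i = none)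
    -- the empty arrangement is excluded
    (hne : ∀ a : A, ∃ i, memb a i ≠ none)
    -- each type has a singleton arrangement
    (hsingle : ∀ x : X, ∃ a : A, ∃ i, memb a i = some x ∧ ∀ j, j ≠ i → memb a j = none)
    -- stability of (μ, u)
    (hμ0 : ∀ a, 0 ≤ μ a)
    (hfeas : ∀ x, ∑ a, ((Finset.univ.filter fun i => memb a i = some x).card : ℝ) * μ a = n x)
    (hstab1 : ∀ a, ∑ i, lam a i * (memb a i).elim 0 u ≥ Φ a)
    (hstab2 : ∀ a, 0 < μ a → ∑ i, lam a i * (memb a i).elim 0 u = Φ a)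
    -- expected loss of player 1
    (ℓ : (A → ℝ) → (X → ℝ) → ℝ)
    (hℓ : ∀ p q, ℓ p q = ∑ a, p a * ∑ x, q x *
      ((∑ i, if memb a i = some x then lam a i else 0) / (n x * Φ a)))
    -- the strategies p*, q*
    (pstar : A → ℝ) (qstar : X → ℝ)
    (hp : ∀ a, pstar a = Φ a * μ a / ∑ a', Φ a' * μ a')
    (hq : ∀ x, qstar x = n x * u x / ∑ x', n x' * u x') :
    (∀ p : A → ℝ, (∀ a, 0 ≤ p a) → (∑ a, p a) = 1 →
      ℓ p qstar ≥ 1 / ∑ x, n x * u x) ∧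
    ℓ pstar qstar = 1 / ∑ x, n x * u x := by
  -- u is positive
  have hupos : ∀ x, 0 < u x := by
    intro x
    obtain ⟨a, i, hi, hj⟩ := hsingle x
    have h1 := hstab1 a
    have hsum : ∑ i', lam a i' * (memb a i').elim 0 u = lam a i * u x := by
      rw [Fintype.sum_eq_single i]
      · rw [hi]; rfl
      · intro j hj'
        rw [(hlamnone a j).2 (hj j hj'), zero_mul]
    rw [hsum] at h1
    by_contra h
    push_neg at h
    have : lam a i * u x ≤ 0 := mul_nonpos_of_nonneg_of_nonpos (hlam0 a i) h
    have := hΦ a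
    linarith
  have hU : 0 < ∑ x, n x * u x :=
    Finset.sum_pos (fun x _ => mul_pos (hn x) (hupos x)) Finset.univ_nonempty
  set U := ∑ x, n x * u x with hUdef
  -- key computation of the inner sum
  have key : ∀ a, ∑ x, qstar x * ((∑ i, if memb a i = some x then lam a i else 0) / (n x * Φ a))
      = (∑ i, lam a i * (memb a i).elim 0 u) / (U * Φ a) := by
    intro a
    have h1 : ∀ x, qstar x * ((∑ i, if memb a i = some x then lam a i else 0) / (n x * Φ a))
        = (∑ i, if memb a i = some x then lam a i * u x else 0) / (U * Φ a) := by
      intro x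
      have hnum : (∑ i, if memb a i = some x then lam a i * u x else 0)
          = u x * ∑ i, if memb a i = some x then lam a i else 0 := by
        rw [Finset.mul_sum]
        refine Finset.sum_congr rfl fun i _ => ?_
        split <;> ring
      rw [hq x, hnum]
      have hnx := (hn x).ne'
      have hUne := hU.ne'
      have hΦa := (hΦ a).ne'
      field_simp
    rw [Finset.sum_congr rfl fun x _ => h1 x, ← Finset.sum_div]
    congr 1
    rw [Finset.sum_comm]
    refine Finset.sum_congr rfl fun i _ => ?_
    cases h : memb a i with
    | none => simp [h]
    | some y =>
        simp only [h, Option.some.injEq, Option.elim]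
        rw [Finset.sum_ite_eq Finset.univ y (fun x => lam a i * u x)]
        simp
  -- lower bound for every arrangement
  have hlow : ∀ a, 1 / U ≤ ∑ x, qstar x *
      ((∑ i, if memb a i = some x then lam a i else 0) / (n x * Φ a)) := by
    intro a
    rw [key a, div_le_div_iff₀ hU (mul_pos hU (hΦ a))]
    have h2 := mul_le_mul_of_nonneg_right (hstab1 a) hU.le
    nlinarith
  constructor
  · intro p hp0 hp1
    rw [hℓ]
    have : ∑ a, p a * (1 / U) ≤ ∑ a, p a * ∑ x, qstar x *
        ((∑ i, if memb a i = some x then lam a i else 0) / (n x * Φ a)) :=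
      Finset.sum_le_sum fun a _ => mul_le_mul_of_nonneg_left (hlow a) (hp0 a)
    have h2 : ∑ a, p a * (1 / U) = 1 / U := by
      rw [← Finset.sum_mul, hp1, one_mul]
    linarith
  · -- equality at pstar
    have hμex : ∃ a, 0 < μ a := by
      obtain ⟨x⟩ := ‹Nonempty X›
      by_contra h
      push_neg at h
      have hz : ∀ a, μ a = 0 := fun a => le_antisymm (h a) (hμ0 a)
      have hfx := hfeas x
      simp only [hz, mul_zero, Finset.sum_const_zero] at hfx
      exact (hn x).ne' hfx.symm
    obtain ⟨a0, ha0⟩ := hμex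
    have hS : 0 < ∑ a', Φ a' * μ a' :=
      Finset.sum_pos' (fun a _ => mul_nonneg (hΦ a).le (hμ0 a))
        ⟨a0, Finset.mem_univ a0, mul_pos (hΦ a0) ha0⟩
    set S := ∑ a', Φ a' * μ a' with hSdef
    rw [hℓ]
    have hterm : ∀ a, pstar a * ∑ x, qstar x *
        ((∑ i, if memb a i = some x then lam a i else 0) / (n x * Φ a))
        = Φ a * μ a / (S * U) := by
      intro a
      rw [key a, hp a]
      rcases eq_or_lt_of_le (hμ0 a) with hz | hpos
      · rw [← hz]; ring
      · rw [hstab2 a hpos]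
        have hΦa := (hΦ a).ne'
        have hUne := hU.ne'
        have hSne := hS.ne'
        field_simp
    rw [Finset.sum_congr rfl fun a _ => hterm a, ← Finset.sum_div, ← hSdef]
    rw [div_eq_div_iff (mul_pos hS hU).ne' hU.ne']
    ring
end

section
/- In the many-to-one LTU hide-and-seek game, if (p*, q*) is a Nash equilibrium, then at equilibrium player 2 is indifferent between all pure strategies x ∈ X: π(p*, δ_x) = π(p*, q*) for every x ∈ X. Consequently μ*_a = p*_a/(Φ_a π(p*,q*)) satisfies the exact feasibility constraint Σ_a M_{x,a} μ*_a = n_x for every x. -/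
/-- At a Nash equilibrium of the N-dimensional hide-and-seek game,
player 2 is indifferent between all pure strategies x ∈ X, and consequently the
recovered matching μ*_a = p*_a/(Φ_a π(p*,q*)) satisfies the exact feasibility
constraints Σ_a M_{x,a} μ*_a = n_x. -/
theorem many_to_one_nash_feasibility
    {X : Type*} [Fintype X] [DecidableEq X] [Nonempty X]
    {N : ℕ} {A : Type*} [Fintype A]
    (memb : A → Fin N → Option X)
    (lam : A → Fin N → ℝ) (Φ : A → ℝ) (n : X → ℝ)
    (hn : ∀ x, 0 < n x) (hΦ : ∀ a, 0 < Φ a)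
    (hlam0 : ∀ a i, 0 ≤ lam a i)
    (hlam1 : ∀ a, ∑ i, lam a i = 1)
    (hlamnone : ∀ a i, lam a i = 0 ↔ memb a i = none)
    -- the empty arrangement is excluded
    (hne : ∀ a : A, ∃ i, memb a i ≠ none)
    -- each type has a singleton arrangement
    (hsingle : ∀ x : X, ∃ a : A, ∃ i, memb a i = some x ∧ ∀ j, j ≠ i → memb a j = none)
    -- expected loss of player 1 and payoff of player 2
    (ℓ π : (A → ℝ) → (X → ℝ) → ℝ)
    (hℓ : ∀ p q, ℓ p q = ∑ a, p a * ∑ x, q x *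
      ((∑ i, if memb a i = some x then lam a i else 0) / (n x * Φ a)))
    (hπ : ∀ p q, π p q = ∑ a, p a * ∑ x, q x *
      (((Finset.univ.filter fun i => memb a i = some x).card : ℝ) / (n x * Φ a)))
    -- (p*, q*) is a Nash equilibrium
    (pstar : A → ℝ) (qstar : X → ℝ)
    (hp0 : ∀ a, 0 ≤ pstar a) (hp1 : (∑ a, pstar a) = 1)
    (hq0 : ∀ x, 0 ≤ qstar x) (hq1 : (∑ x, qstar x) = 1)
    (hNash1 : ∀ p : A → ℝ, (∀ a, 0 ≤ p a) → (∑ a, p a) = 1 →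
      ℓ pstar qstar ≤ ℓ p qstar)
    (hNash2 : ∀ q : X → ℝ, (∀ x, 0 ≤ q x) → (∑ x, q x) = 1 →
      π pstar qstar ≥ π pstar q)
    -- the recovered matching
    (μ : A → ℝ)
    (hμ : ∀ a, μ a = pstar a / (Φ a * π pstar qstar)) :
    (∀ x : X, π pstar (fun x' => if x' = x then 1 else 0) = π pstar qstar) ∧
    (∀ x : X, ∑ a, ((Finset.univ.filter fun i => memb a i = some x).card : ℝ) * μ a = n x) := by
  classical
  have hnΦ : ∀ (x : X) (a : A), 0 < n x * Φ a := fun x a => mul_pos (hn x) (hΦ a)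
  -- payoff abbreviations
  set β : A → X → ℝ := fun a x =>
    ((Finset.univ.filter fun i => memb a i = some x).card : ℝ) / (n x * Φ a) with hβdef
  set α : A → X → ℝ := fun a x =>
    (∑ i, if memb a i = some x then lam a i else 0) / (n x * Φ a) with hαdef
  have hβ0 : ∀ a x, 0 ≤ β a x := fun a x =>
    div_nonneg (Nat.cast_nonneg _) (hnΦ x a).le
  have hα0 : ∀ a x, 0 ≤ α a x := fun a x =>
    div_nonneg (Finset.sum_nonneg fun i _ => by
      by_cases h : memb a i = some x <;> simp [h, hlam0]) (hnΦ x a).le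
  have hπ' : ∀ p q, π p q = ∑ a, p a * ∑ x, q x * β a x := by
    intro p q; rw [hπ]
  have hℓ' : ∀ p q, ℓ p q = ∑ a, p a * ∑ x, q x * α a x := by
    intro p q; rw [hℓ]
  -- if β a x > 0 then α a x > 0
  have hβα : ∀ a x, 0 < β a x → 0 < α a x := by
    intro a x hb
    have hcard : 0 < (Finset.univ.filter fun i => memb a i = some x).card := by
      by_contra h
      push_neg at h
      interval_cases h' : (Finset.univ.filter fun i => memb a i = some x).card
      · simp only [hβdef, h'] at hb
        norm_num at hb
    obtain ⟨i, hi⟩ := Finset.card_pos.mp hcard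
    have hi' : memb a i = some x := (Finset.mem_filter.mp hi).2
    have hlampos : 0 < lam a i := by
      rcases lt_or_eq_of_le (hlam0 a i) with h | h
      · exact h
      · exact absurd ((hlamnone a i).mp h.symm) (by simp [hi'])
    have hnum : 0 < ∑ j, if memb a j = some x then lam a j else 0 := by
      refine Finset.sum_pos' (fun j _ => by by_cases h : memb a j = some x <;> simp [h, hlam0]) ?_
      exact ⟨i, Finset.mem_univ i, by simp [hi', hlampos]⟩
    exact div_pos hnum (hnΦ x a)
  -- value of player 2 against δ_x
  set t : X → ℝ := fun x => ∑ a, pstar a * β a x with htdef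
  have hπδ : ∀ x : X, π pstar (fun x' => if x' = x then 1 else 0) = t x := by
    intro x
    rw [hπ']
    refine Finset.sum_congr rfl fun a _ => ?_
    congr 1
    rw [Finset.sum_eq_single x]
    · simp
    · intro x' _ hx'; simp [hx']
    · intro h; exact absurd (Finset.mem_univ x) h
  -- v is the qstar-mixture of t
  have hvmix : π pstar qstar = ∑ x, qstar x * t x := by
    rw [hπ']
    simp_rw [htdef, Finset.mul_sum]
    rw [Finset.sum_comm]
    exact Finset.sum_congr rfl fun x _ => Finset.sum_congr rfl fun a _ => by ring
  -- positivity of the equilibrium value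
  have hvpos : 0 < π pstar qstar := by
    have hcard : (0:ℝ) < (Fintype.card X : ℝ) := by exact_mod_cast Fintype.card_pos
    set q : X → ℝ := fun _ => (Fintype.card X : ℝ)⁻¹ with hqdef
    have hq0' : ∀ x, 0 ≤ q x := fun x => inv_nonneg.mpr hcard.le
    have hq1' : ∑ x, q x = 1 := by
      simp only [hqdef, Finset.sum_const, Finset.card_univ, nsmul_eq_mul]
      field_simp
    have h2 := hNash2 q hq0' hq1'
    have hpos : 0 < π pstar q := by
      rw [hπ']
      obtain ⟨a0, ha0⟩ : ∃ a, 0 < pstar a := by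
        by_contra h
        push_neg at h
        have hz : ∑ a, pstar a = 0 :=
          Finset.sum_eq_zero fun a _ => le_antisymm (h a) (hp0 a)
        rw [hp1] at hz; norm_num at hz
      have hinner : ∀ a, 0 < ∑ x, q x * β a x := by
        intro a
        obtain ⟨i, hi⟩ := hne a
        obtain ⟨x0, hx0⟩ := Option.ne_none_iff_exists'.mp hi
        have hβpos : 0 < β a x0 := by
          have : 0 < (Finset.univ.filter fun j => memb a j = some x0).card :=
            Finset.card_pos.mpr ⟨i, Finset.mem_filter.mpr ⟨Finset.mem_univ i, hx0⟩⟩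
          exact div_pos (by exact_mod_cast this) (hnΦ x0 a)
        refine Finset.sum_pos' (fun x _ => mul_nonneg (hq0' x) (hβ0 a x)) ?_
        exact ⟨x0, Finset.mem_univ x0, mul_pos (inv_pos.mpr hcard) hβpos⟩
      refine Finset.sum_pos' (fun a _ => mul_nonneg (hp0 a) (hinner a).le) ?_
      exact ⟨a0, Finset.mem_univ a0, mul_pos ha0 (hinner a0)⟩
    linarith
  -- t x ≤ v
  have htle : ∀ x, t x ≤ π pstar qstar := by
    intro x
    have hd0 : ∀ x', (0:ℝ) ≤ if x' = x then 1 else 0 := by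
      intro x'; by_cases h : x' = x <;> simp [h]
    have hd1 : ∑ x', (if x' = x then (1:ℝ) else 0) = 1 := by simp
    have := hNash2 _ hd0 hd1
    rw [hπδ x] at this
    exact this
  -- indifference
  have hteq : ∀ x, t x = π pstar qstar := by
    intro x
    by_contra hnex
    have hlt : t x < π pstar qstar := lt_of_le_of_ne (htle x) hnex
    -- qstar x = 0
    have hqx : qstar x = 0 := by
      have hsum : ∑ x', qstar x' * (π pstar qstar - t x') = 0 := by
        simp_rw [mul_sub]
        rw [Finset.sum_sub_distrib, ← Finset.sum_mul, hq1, one_mul, ← hvmix, sub_self]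
      have hall := (Finset.sum_eq_zero_iff_of_nonneg
        (fun x' _ => mul_nonneg (hq0 x') (sub_nonneg.mpr (htle x')))).mp hsum x
        (Finset.mem_univ x)
      rcases mul_eq_zero.mp hall with h | h
      · exact h
      · exact absurd h (by linarith)
    -- singleton arrangement for x
    obtain ⟨a0, i0, hi0, hrest⟩ := hsingle x
    set p : A → ℝ := fun a => if a = a0 then 1 else 0 with hpdef
    have hp0' : ∀ a, 0 ≤ p a := by
      intro a; by_cases h : a = a0 <;> simp [hpdef, h]
    have hp1' : ∑ a, p a = 1 := by simp [hpdef]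
    have hℓp : ℓ p qstar = 0 := by
      rw [hℓ']
      rw [Finset.sum_eq_single a0]
      · simp only [hpdef, if_pos rfl, one_mul]
        refine Finset.sum_eq_zero fun x' _ => ?_
        by_cases hx' : x' = x
        · subst hx'; rw [hqx, zero_mul]
        · have : α a0 x' = 0 := by
            have hnum : ∑ i, (if memb a0 i = some x' then lam a0 i else 0) = 0 := by
              refine Finset.sum_eq_zero fun i _ => ?_
              by_cases hii : i = i0
              · subst hii
                rw [if_neg]
                rw [hi0]
                simp [hx']
                intro h; exact hx' h.symm
              · rw [if_neg]
                rw [hrest i hii]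
                simp
            simp only [hαdef, hnum, zero_div]
          rw [this, mul_zero]
      · intro a _ ha
        simp [hpdef, ha]
      · intro h; exact absurd (Finset.mem_univ a0) h
    have hℓstar0 : ℓ pstar qstar ≤ 0 := by
      have := hNash1 p hp0' hp1'
      linarith
    have hℓnn : 0 ≤ ℓ pstar qstar := by
      rw [hℓ']
      exact Finset.sum_nonneg fun a _ => mul_nonneg (hp0 a)
        (Finset.sum_nonneg fun x' _ => mul_nonneg (hq0 x') (hα0 a x'))
    have hℓeq : ℓ pstar qstar = 0 := le_antisymm hℓstar0 hℓnn
    -- then π pstar qstar = 0, contradiction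
    have hπ0 : π pstar qstar = 0 := by
      rw [hℓ'] at hℓeq
      have hterma := (Finset.sum_eq_zero_iff_of_nonneg
        (fun a _ => mul_nonneg (hp0 a)
          (Finset.sum_nonneg fun x' _ => mul_nonneg (hq0 x') (hα0 a x')))).mp hℓeq
      rw [hπ']
      refine Finset.sum_eq_zero fun a _ => ?_
      rcases mul_eq_zero.mp (hterma a (Finset.mem_univ a)) with hpa | hin
      · rw [hpa, zero_mul]
      · have hxall := (Finset.sum_eq_zero_iff_of_nonneg
          (fun x' _ => mul_nonneg (hq0 x') (hα0 a x'))).mp hin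
        have : ∑ x', qstar x' * β a x' = 0 := by
          refine Finset.sum_eq_zero fun x' _ => ?_
          rcases mul_eq_zero.mp (hxall x' (Finset.mem_univ x')) with hq' | hα'
          · rw [hq', zero_mul]
          · rcases lt_or_eq_of_le (hβ0 a x') with hb | hb
            · exact absurd hα' (ne_of_gt (hβα a x' hb))
            · rw [← hb, mul_zero]
        rw [this, mul_zero]
    linarith
  constructor
  · intro x
    rw [hπδ x, hteq x]
  · intro x
    have hv : π pstar qstar ≠ 0 := ne_of_gt hvpos
    have key : ∀ a, ((Finset.univ.filter fun i => memb a i = some x).card : ℝ) * μ a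
        = (n x / π pstar qstar) * (pstar a * β a x) := by
      intro a
      rw [hμ a]
      simp only [hβdef]
      linear_combination (-(((Finset.univ.filter fun i => memb a i = some x).card : ℝ) * pstar a * (Φ a)⁻¹ * (π pstar qstar)⁻¹)) * mul_inv_cancel₀ (hn x).ne'
    calc ∑ a, ((Finset.univ.filter fun i => memb a i = some x).card : ℝ) * μ a
        = ∑ a, (n x / π pstar qstar) * (pstar a * β a x) :=
          Finset.sum_congr rfl fun a _ => key a
      _ = (n x / π pstar qstar) * t x := by rw [← Finset.mul_sum]
      _ = n x := by rw [hteq x]; field_simp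
end
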